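/- arXiv:2506.01664 — 3 statements merged into one kernel-verified Lean document; each statement's English description precedes it below -/
import Mathlib

section
/- Let T0 ⊆ T0 ∪ K_1 ⊆ T0 ∪ K_1 ∪ K_2 be a chain of local theory extensions such that K_1 and K_2 are sets of flat and linear clauses. Then T0 ∪ K_1 ⊆ T0 ∪ K_1 ∪ K_2 is a local theory extension. -/
/- Common framework: first-order signatures with designated sets of interpreted symbols,
uninterpreted (extension) function symbols and fresh constants, clauses, flatness/linearity,
instances, locality of theory extensions, (general) uniform interpolants, and a semantic
specification of the symbol-elimination Algorithm 1 of the paper. -/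

open FirstOrder FirstOrder.Language

namespace PaperSE

variable {L : FirstOrder.Language.{0, 0}}

/-- A function symbol of `L` together with its arity. Constants are the arity-0 symbols. -/
abbrev Sym (L : FirstOrder.Language.{0, 0}) : Type := Σ n : ℕ, L.Functions n

/-- Ground terms (no variables; constants are `0`-ary function symbols of `L`). -/
abbrev GTerm (L : FirstOrder.Language.{0, 0}) : Type := L.Term Empty

/-- A ground term viewed as a term with variables from `α`. -/
def GTerm.cast {α : Type} (t : GTerm L) : L.Term α := Term.relabel Empty.elim t

/-- The term `c()` for a constant symbol `c`. -/
def constT (c : L.Functions 0) : GTerm L := Term.func c (fun j => j.elim0)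

/- ### Structures, with the interpretation passed explicitly -/

def FunM (M : Type) (S : L.Structure M) {n : ℕ} (f : L.Functions n) (x : Fin n → M) : M := by
  letI := S; exact Structure.funMap f x

def RelM (M : Type) (S : L.Structure M) {n : ℕ} (r : L.Relations n) (x : Fin n → M) : Prop := by
  letI := S; exact Structure.RelMap r x

def TVal (M : Type) (S : L.Structure M) {α : Type} (v : α → M) (t : L.Term α) : M := by
  letI := S; exact t.realize v

/-- Value of a ground term. -/
def GVal (M : Type) (S : L.Structure M) (t : GTerm L) : M :=
  TVal M S (fun e : Empty => e.elim) t

def RealizeF (M : Type) (S : L.Structure M) {α : Type} (φ : L.Formula α) (v : α → M) : Prop := by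
  letI := S; exact φ.Realize v

def RealizeSent (M : Type) (S : L.Structure M) (φ : L.Sentence) : Prop :=
  RealizeF M S φ (fun e : Empty => e.elim)

def ModelsT (M : Type) (S : L.Structure M) (T : L.Theory) : Prop :=
  ∀ φ ∈ T, RealizeSent M S φ

/- ### Symbols and ground terms occurring in terms and formulas -/

/-- The set of subterms of a term. -/
def subterms {α : Type} : L.Term α → Set (L.Term α)
  | .var a => {Term.var a}
  | .func f ts => insert (Term.func f ts) (⋃ i, subterms (ts i))

/-- The function (and constant) symbols occurring in a term. -/
def termSyms {α : Type} : L.Term α → Set (Sym L)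
  | .var _ => ∅
  | .func f ts => insert ⟨_, f⟩ (⋃ i, termSyms (ts i))

/-- The list of occurrences of variables in a term. -/
def varOccs {α : Type} : L.Term α → List α
  | .var a => [a]
  | .func _ ts => (List.finRange _).flatMap (fun i => varOccs (ts i))

/-- The list of occurrences of constant symbols in a ground term. -/
def constOccs : GTerm L → List (L.Functions 0)
  | .var e => e.elim
  | .func (l := n) f ts =>
      if h : n = 0 then [h ▸ f]
      else (List.finRange n).flatMap (fun i => constOccs (ts i))

/-- Does the term start with a function symbol from `F`? -/
def rootIn (F : Set (Sym L)) {α : Type} : L.Term α → Prop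
  | .var _ => False
  | .func f _ => (⟨_, f⟩ : Sym L) ∈ F

/-- The function (and constant) symbols occurring in a bounded formula. -/
def bfSyms {α : Type} : ∀ {n : ℕ}, L.BoundedFormula α n → Set (Sym L)
  | _, .falsum => ∅
  | _, .equal t u => termSyms t ∪ termSyms u
  | _, .rel _ ts => ⋃ i, termSyms (ts i)
  | _, .imp f g => bfSyms f ∪ bfSyms g
  | _, .all f => bfSyms f

abbrev sentSyms (s : L.Sentence) : Set (Sym L) := bfSyms s

def theorySyms (T : L.Theory) : Set (Sym L) := ⋃ s ∈ T, sentSyms s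

/-- The ground terms occurring in a bounded formula. -/
def bfGTerms {α : Type} : ∀ {n : ℕ}, L.BoundedFormula α n → Set (GTerm L)
  | _, .falsum => ∅
  | _, .equal t u => {g | GTerm.cast g ∈ subterms t ∨ GTerm.cast g ∈ subterms u}
  | _, .rel _ ts => {g | ∃ i, GTerm.cast g ∈ subterms (ts i)}
  | _, .imp f g => bfGTerms f ∪ bfGTerms g
  | _, .all f => bfGTerms f

abbrev sentGTerms (s : L.Sentence) : Set (GTerm L) := bfGTerms s

/- ### Literals and clauses -/

/-- Literals over variables `α`. -/
inductive Lit (L : FirstOrder.Language.{0, 0}) (α : Type) : Type where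
  | eq (t u : L.Term α)
  | neq (t u : L.Term α)
  | rel {n : ℕ} (R : L.Relations n) (ts : Fin n → L.Term α)
  | nrel {n : ℕ} (R : L.Relations n) (ts : Fin n → L.Term α)

namespace Lit

def terms {α : Type} : Lit L α → Set (L.Term α)
  | eq t u => {t, u}
  | neq t u => {t, u}
  | rel _ ts => Set.range ts
  | nrel _ ts => Set.range ts

/-- An atom (positive literal). -/
def Positive {α : Type} : Lit L α → Prop
  | eq _ _ => True
  | rel _ _ => True
  | _ => False

def subst {α β : Type} (σ : α → L.Term β) : Lit L α → Lit L β
  | eq t u => eq (t.subst σ) (u.subst σ)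
  | neq t u => neq (t.subst σ) (u.subst σ)
  | rel R ts => rel R (fun i => (ts i).subst σ)
  | nrel R ts => nrel R (fun i => (ts i).subst σ)

def Realize (M : Type) (S : L.Structure M) {α : Type} (v : α → M) : Lit L α → Prop
  | eq t u => TVal M S v t = TVal M S v u
  | neq t u => TVal M S v t ≠ TVal M S v u
  | rel R ts => RelM M S R (fun i => TVal M S v (ts i))
  | nrel R ts => ¬ RelM M S R (fun i => TVal M S v (ts i))

def syms {α : Type} (l : Lit L α) : Set (Sym L) := ⋃ t ∈ l.terms, termSyms t

end Lit

/-- A (universally closed) clause: a disjunction of literals with variables `Fin nvars`,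
viewed as universally quantified. -/
structure Clause (L : FirstOrder.Language.{0, 0}) : Type where
  nvars : ℕ
  lits : List (Lit L (Fin nvars))

/-- A ground clause: a disjunction of ground literals. -/
abbrev GClause (L : FirstOrder.Language.{0, 0}) : Type := List (Lit L Empty)

def Clause.instantiate (C : Clause L) (σ : Fin C.nvars → GTerm L) : GClause L :=
  C.lits.map (Lit.subst σ)

def Clause.syms (C : Clause L) : Set (Sym L) := ⋃ l ∈ C.lits, Lit.syms l

def GClause.syms (C : GClause L) : Set (Sym L) := ⋃ l ∈ C, Lit.syms l

def GClause.gterms (C : GClause L) : Set (GTerm L) := ⋃ l ∈ C, ⋃ t ∈ Lit.terms l, subterms t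

def ClausesSyms (K : Set (Clause L)) : Set (Sym L) := ⋃ C ∈ K, C.syms

def GSyms (G : Set (GClause L)) : Set (Sym L) := ⋃ C ∈ G, GClause.syms C

def GTerms (G : Set (GClause L)) : Set (GTerm L) := ⋃ C ∈ G, GClause.gterms C

/- ### Satisfaction -/

def ClauseHolds (M : Type) (S : L.Structure M) (C : Clause L) : Prop :=
  ∀ v : Fin C.nvars → M, ∃ l ∈ C.lits, Lit.Realize M S v l

def GClauseHolds (M : Type) (S : L.Structure M) (C : GClause L) : Prop :=
  ∃ l ∈ C, Lit.Realize M S (fun e : Empty => e.elim) l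

def ModelsK (M : Type) (S : L.Structure M) (K : Set (Clause L)) : Prop :=
  ∀ C ∈ K, ClauseHolds M S C

def ModelsG (M : Type) (S : L.Structure M) (G : Set (GClause L)) : Prop :=
  ∀ C ∈ G, GClauseHolds M S C

/-- Satisfiability (in the joint signature) of base theory `T0`, clause set `K`
and ground clauses `G`. -/
def SatTKG (T0 : L.Theory) (K : Set (Clause L)) (G : Set (GClause L)) : Prop :=
  ∃ (M : Type) (_ : Nonempty M) (S : L.Structure M),
    ModelsT M S T0 ∧ ModelsK M S K ∧ ModelsG M S G

/-- `G ⊨_{T0 ∪ K} θ` for a sentence `θ`. -/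
def EntailsC (T0 : L.Theory) (K : Set (Clause L)) (G : Set (GClause L)) (θ : L.Sentence) : Prop :=
  ∀ (M : Type) (S : L.Structure M), Nonempty M →
    ModelsT M S T0 → ModelsK M S K → ModelsG M S G → RealizeSent M S θ

/-- `A ⊨_{T0 ∪ K} θ` for sentences `A`, `θ`. -/
def EntailsS (T0 : L.Theory) (K : Set (Clause L)) (A θ : L.Sentence) : Prop :=
  ∀ (M : Type) (S : L.Structure M), Nonempty M →
    ModelsT M S T0 → ModelsK M S K → RealizeSent M S A → RealizeSent M S θ

/- ### Extension ground terms and instances -/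

/-- `est(K, G)`: the ground terms starting with a function symbol in `F`
occurring in `K` or in `G`. -/
def estKG (F : Set (Sym L)) (K : Set (Clause L)) (G : Set (GClause L)) : Set (GTerm L) :=
  { t | rootIn F t ∧
      ((∃ C ∈ K, ∃ l ∈ C.lits, ∃ s ∈ Lit.terms l, GTerm.cast t ∈ subterms s) ∨
       (∃ C ∈ G, t ∈ GClause.gterms C)) }

/-- `K[Tt]`: the set of ground instances of clauses of `K` all of whose terms starting
with a function symbol in `F` belong to `Tt`. -/
def instancesIn (F : Set (Sym L)) (K : Set (Clause L)) (Tt : Set (GTerm L)) :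
    Set (GClause L) :=
  { D | ∃ C ∈ K, ∃ σ : Fin C.nvars → GTerm L, D = C.instantiate σ ∧
      ∀ t ∈ GClause.gterms (C.instantiate σ), rootIn F t → t ∈ Tt }

/- ### Locality -/

/-- Locality of the extension of the theory `T0` together with base clauses `K0`
by the clauses `K`, with extension symbols `F`. -/
def LocalExt2 (F : Set (Sym L)) (T0 : L.Theory) (K0 K : Set (Clause L)) : Prop :=
  ∀ G : Set (GClause L), G.Finite →
    ((¬ ∃ (M : Type) (_ : Nonempty M) (S : L.Structure M),
        ModelsT M S T0 ∧ ModelsK M S K0 ∧ ModelsK M S K ∧ ModelsG M S G) ↔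
     (¬ ∃ (M : Type) (_ : Nonempty M) (S : L.Structure M),
        ModelsT M S T0 ∧ ModelsK M S K0 ∧
          ModelsG M S (instancesIn F K (estKG F K G) ∪ G)))

/-- Locality of the theory extension `T0 ⊆ T0 ∪ K` with extension symbols `F`. -/
abbrev LocalExt (F : Set (Sym L)) (T0 : L.Theory) (K : Set (Clause L)) : Prop :=
  LocalExt2 F T0 ∅ K

/-- `Ψ`-locality of the theory extension `T0 ⊆ T0 ∪ K` with extension symbols `F`. -/
def PsiLocalExt (F : Set (Sym L)) (T0 : L.Theory) (K : Set (Clause L))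
    (Ψ : Set (GTerm L) → Set (GTerm L)) : Prop :=
  ∀ G : Set (GClause L), G.Finite →
    (¬ SatTKG T0 K G ↔ ¬ SatTKG T0 ∅ (instancesIn F K (Ψ (estKG F K G)) ∪ G))

/- ### Flatness and linearity -/

/-- All symbols occurring directly below a function symbol from `F` are variables. -/
def flatTerm (F : Set (Sym L)) {α : Type} : L.Term α → Prop
  | .var _ => True
  | .func f ts =>
      ((⟨_, f⟩ : Sym L) ∈ F → ∀ i, ∃ a, ts i = Term.var a) ∧ ∀ i, flatTerm F (ts i)

/-- All symbols occurring directly below a function symbol from `F` are constants. -/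
def flatGTerm (F : Set (Sym L)) : GTerm L → Prop
  | .var e => e.elim
  | .func f ts =>
      ((⟨_, f⟩ : Sym L) ∈ F → ∀ i, ∃ c : L.Functions 0, ts i = constT c) ∧
        ∀ i, flatGTerm F (ts i)

def Clause.extTerms (F : Set (Sym L)) (C : Clause L) : Set (L.Term (Fin C.nvars)) :=
  { t | rootIn F t ∧ ∃ l ∈ C.lits, ∃ s ∈ Lit.terms l, t ∈ subterms s }

def Clause.Flat (F : Set (Sym L)) (C : Clause L) : Prop :=
  ∀ l ∈ C.lits, ∀ t ∈ Lit.terms l, flatTerm F t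

def Clause.Linear (F : Set (Sym L)) (C : Clause L) : Prop :=
  (∀ t ∈ C.extTerms F, ∀ u ∈ C.extTerms F,
      (∃ x, x ∈ varOccs t ∧ x ∈ varOccs u) → t = u) ∧
  (∀ t ∈ C.extTerms F, (varOccs t).Nodup)

/-- Every variable occurring in the clause occurs below a function symbol from `F`. -/
def Clause.VarsBelowExt (F : Set (Sym L)) (C : Clause L) : Prop :=
  ∀ x : Fin C.nvars, (∃ l ∈ C.lits, ∃ s ∈ Lit.terms l, x ∈ varOccs s) →
    ∃ t ∈ C.extTerms F, x ∈ varOccs t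

def GClause.extTerms (F : Set (Sym L)) (C : GClause L) : Set (GTerm L) :=
  { t | rootIn F t ∧ t ∈ GClause.gterms C }

def GClause.Flat (F : Set (Sym L)) (C : GClause L) : Prop :=
  ∀ l ∈ C, ∀ t ∈ Lit.terms l, flatGTerm F t

def GClause.Linear (F : Set (Sym L)) (C : GClause L) : Prop :=
  (∀ t ∈ GClause.extTerms F C, ∀ u ∈ GClause.extTerms F C,
      (∃ c, c ∈ constOccs t ∧ c ∈ constOccs u) → t = u) ∧
  (∀ t ∈ GClause.extTerms F C, (constOccs t).Nodup)

/- ### Agreement of structures and (reduct-)embeddings -/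

/-- The two interpretations agree on all relation symbols and on the function symbols in `F`. -/
def AgreeOn (M : Type) (S1 S2 : L.Structure M) (F : Set (Sym L)) : Prop :=
  (∀ (n : ℕ) (f : L.Functions n), (⟨n, f⟩ : Sym L) ∈ F →
      ∀ x : Fin n → M, FunM M S1 f x = FunM M S2 f x) ∧
  (∀ (n : ℕ) (r : L.Relations n) (x : Fin n → M), RelM M S1 r x ↔ RelM M S2 r x)

/-- An embedding of the reducts to the subsignature consisting of all predicate symbols and
the function symbols in `F`: an injective map preserving and reflecting all predicates and
preserving the functions in `F`. -/
structure SubEmb (L : FirstOrder.Language.{0, 0}) (F : Set (Sym L)) (M N : Type)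
    (SM : L.Structure M) (SN : L.Structure N) : Type where
  toFun : M → N
  inj : Function.Injective toFun
  map_fun : ∀ (n : ℕ) (f : L.Functions n), (⟨n, f⟩ : Sym L) ∈ F →
      ∀ x : Fin n → M, toFun (FunM M SM f x) = FunM N SN f (toFun ∘ x)
  map_rel : ∀ (n : ℕ) (r : L.Relations n) (x : Fin n → M),
      RelM M SM r x ↔ RelM N SN r (toFun ∘ x)

/- ### Quantifier elimination and related properties of the base theory -/

/-- `T0` allows quantifier elimination (for formulas over the symbols in `F0`). -/
def HasQE (T0 : L.Theory) (F0 : Set (Sym L)) : Prop :=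
  ∀ (m : ℕ) (φ : L.Formula (Fin m)), bfSyms φ ⊆ F0 →
    ∃ ψ : L.Formula (Fin m), ψ.IsQF ∧ bfSyms ψ ⊆ F0 ∧
      ∀ (M : Type) (S : L.Structure M), Nonempty M → ModelsT M S T0 →
        ∀ v : Fin m → M, (RealizeF M S φ v ↔ RealizeF M S ψ v)

def ModelsLits (M : Type) (S : L.Structure M) (A : List (Lit L Empty)) : Prop :=
  ∀ l ∈ A, Lit.Realize M S (fun e : Empty => e.elim) l

def litListSyms (A : List (Lit L Empty)) : Set (Sym L) := ⋃ l ∈ A, Lit.syms l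

/-- Convexity of a theory (with clause axioms `K`). -/
def Convex (T0 : L.Theory) (K : Set (Clause L)) : Prop :=
  ∀ Γ : List (Lit L Empty), (∀ l ∈ Γ, l.Positive) →
  ∀ (m : ℕ) (s t : Fin (m + 1) → GTerm L),
    (∀ (M : Type) (S : L.Structure M), Nonempty M → ModelsT M S T0 → ModelsK M S K →
        ModelsLits M S Γ → ∃ i, GVal M S (s i) = GVal M S (t i)) →
    ∃ i0, ∀ (M : Type) (S : L.Structure M), Nonempty M → ModelsT M S T0 → ModelsK M S K →
        ModelsLits M S Γ → GVal M S (s i0) = GVal M S (t i0)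

/-- Stable infiniteness. -/
def StablyInfinite (T0 : L.Theory) (K : Set (Clause L)) : Prop :=
  ∀ φ : L.Sentence, φ.IsQF →
    (∃ (M : Type) (_ : Nonempty M) (S : L.Structure M),
        ModelsT M S T0 ∧ ModelsK M S K ∧ RealizeSent M S φ) →
    ∃ (M : Type) (_ : Infinite M) (S : L.Structure M),
        ModelsT M S T0 ∧ ModelsK M S K ∧ RealizeSent M S φ

/-- Equality interpolation (for a convex theory with interpreted symbols `F0`). -/
def EqInterpolating (T0 : L.Theory) (F0 : Set (Sym L)) : Prop :=
  ∀ (A B : List (Lit L Empty)) (a b : L.Functions 0),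
    (⟨0, a⟩ : Sym L) ∉ litListSyms B → (⟨0, b⟩ : Sym L) ∉ litListSyms A →
    (∀ (M : Type) (S : L.Structure M), Nonempty M → ModelsT M S T0 → ModelsLits M S A →
        ModelsLits M S B → GVal M S (constT a) = GVal M S (constT b)) →
    ∃ t : GTerm L, termSyms t ⊆ F0 ∪ (litListSyms A ∩ litListSyms B) ∧
      ∀ (M : Type) (S : L.Structure M), Nonempty M → ModelsT M S T0 → ModelsLits M S A →
        ModelsLits M S B →
          GVal M S (constT a) = GVal M S t ∧ GVal M S t = GVal M S (constT b)

/-- A universal sentence. -/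
def IsUniversalSent (s : L.Sentence) : Prop :=
  ∃ (m : ℕ) (ψ : L.BoundedFormula Empty m), ψ.IsQF ∧ s = ψ.alls

def IsUniversalTheory (T : L.Theory) : Prop := ∀ s ∈ T, IsUniversalSent s

/-- Close the outermost `k` bound variables existentially. -/
def exsTo {m : ℕ} : ∀ {k : ℕ}, L.BoundedFormula Empty (m + k) → L.BoundedFormula Empty m
  | 0, φ => φ
  | _ + 1, φ => exsTo φ.ex

/-- A `∀∃`-sentence. -/
def IsAESent (s : L.Sentence) : Prop :=
  ∃ (m k : ℕ) (ψ : L.BoundedFormula Empty (m + k)), ψ.IsQF ∧ s = (exsTo ψ).alls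

def IsAETheory (T : L.Theory) : Prop := ∀ s ∈ T, IsAESent s

/- ### General uniform interpolants and uniform interpolants (covers) -/

/-- `ψ` is a general uniform interpolant of the ground clause set `G` w.r.t. the theory
`T0 ∪ K` and the symbols in `Keep` (which contains all interpreted symbols, the shared
uninterpreted symbols and the shared constants). -/
def IsGUIg (T0 : L.Theory) (K : Set (Clause L)) (G : Set (GClause L))
    (Keep : Set (Sym L)) (ψ : L.Sentence) : Prop :=
  ψ.IsQF ∧ sentSyms ψ ⊆ Keep ∧ EntailsC T0 K G ψ ∧
  ∀ θ : L.Sentence, θ.IsQF → sentSyms θ ∩ GSyms G ⊆ Keep →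
    EntailsC T0 K G θ → EntailsS T0 K ψ θ

/-- `ψ` is a general uniform interpolant of the ground formula `φ` w.r.t. the theory
`T0 ∪ K` and the symbols in `Keep`. -/
def IsGUIs (T0 : L.Theory) (K : Set (Clause L)) (φ : L.Sentence)
    (Keep : Set (Sym L)) (ψ : L.Sentence) : Prop :=
  ψ.IsQF ∧ sentSyms ψ ⊆ Keep ∧ EntailsS T0 K φ ψ ∧
  ∀ θ : L.Sentence, θ.IsQF → sentSyms θ ∩ sentSyms φ ⊆ Keep →
    EntailsS T0 K φ θ → EntailsS T0 K ψ θ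

/-- `ψ` is a uniform interpolant (cover) of `Γ` w.r.t. the theory `T0 ∪ K`, the set `CC`
of (eliminable) constants and the kept constants `Cs ⊆ CC`; all other symbols are treated
as interpreted. -/
def IsUI (T0 : L.Theory) (K : Set (Clause L)) (CC Cs : Set (Sym L)) (Γ ψ : L.Sentence) : Prop :=
  ψ.IsQF ∧ sentSyms ψ ∩ CC ⊆ Cs ∧ EntailsS T0 K Γ ψ ∧
  ∀ θ : L.Sentence, θ.IsQF → sentSyms θ ∩ sentSyms Γ ∩ CC ⊆ Cs →
    EntailsS T0 K Γ θ → EntailsS T0 K ψ θ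

/- ### The semantic specification of Algorithm 1 -/

/-- The constants occurring in some term of `S` as an argument of a function symbol in `Sigs`. -/
def argConstsOf (Sigs : Set (Sym L)) (S : Set (GTerm L)) : Set (Sym L) :=
  { p | ∃ c : L.Functions 0, p = ⟨0, c⟩ ∧
      ∃ t ∈ S, ∃ (n : ℕ) (f : L.Functions n) (ts : Fin n → GTerm L),
        t = Term.func f ts ∧ (⟨n, f⟩ : Sym L) ∈ Sigs ∧ ∃ i, ts i = constT c }

/-- Semantic specification of the output `Γ` of Algorithm 1, applied to the theory extension
`T0 ∪ K` (extension symbols `F`), the ground clauses `G` and the instantiation terms `Tt`,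
keeping exactly the symbols in `Keep` (all interpreted symbols, the parameters `Sigs` and the
non-eliminated constants):  `Γ` is a ground formula over `Keep` which, on each model of `T0`,
expresses the existence of values for the eliminated constants and for the purified names of
the extension terms (equivalently, of a reinterpretation of the eliminated symbols) satisfying
`K[Tt] ∪ G`. -/
def AlgOneOutput (F : Set (Sym L)) (T0 : L.Theory) (K : Set (Clause L)) (G : Set (GClause L))
    (Tt : Set (GTerm L)) (Keep : Set (Sym L)) (Γ : L.Sentence) : Prop :=
  Γ.IsQF ∧ sentSyms Γ ⊆ Keep ∧
  ∀ (M : Type) (S : L.Structure M), Nonempty M → ModelsT M S T0 →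
    (RealizeSent M S Γ ↔
      ∃ S' : L.Structure M, AgreeOn M S S' Keep ∧
        ModelsG M S' (instancesIn F K Tt) ∧ ModelsG M S' G)

/- ### Implicit definability -/

/-- `f` is implicitly definable w.r.t. `T0 ∪ K` over the symbols in `Pi1`:
any two interpretations (on the same universe) which agree on `Pi1` and are both models
of `T0 ∪ K` interpret `f` in the same way.  (This is the standard semantic rendering of
the definition via renaming the symbols outside `Pi1` to primed copies.) -/
def ImplicitlyDefinable (T0 : L.Theory) (K : Set (Clause L)) (Pi1 : Set (Sym L))
    {n : ℕ} (f : L.Functions n) : Prop :=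
  ∀ (M : Type), Nonempty M → ∀ S1 S2 : L.Structure M,
    AgreeOn M S1 S2 Pi1 →
    ModelsT M S1 T0 → ModelsK M S1 K → ModelsT M S2 T0 → ModelsK M S2 K →
    ∀ x : Fin n → M, FunM M S1 f x = FunM M S2 f x

end PaperSE

namespace PaperSE

section Aux

variable {L : FirstOrder.Language.{0, 0}}

lemma TVal_eq (M : Type) (S : L.Structure M) {α : Type} (v : α → M) (t : L.Term α) :
    TVal M S v t = @Term.realize L M S α v t := rfl

lemma termSyms_subterm {α : Type} {s t : L.Term α} (h : t ∈ subterms s) :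
    termSyms t ⊆ termSyms s := by
  induction s with
  | var a =>
      simp only [subterms, Set.mem_singleton_iff] at h
      subst h; exact subset_rfl
  | func f ts ih =>
      simp only [subterms, Set.mem_insert_iff, Set.mem_iUnion] at h
      rcases h with h | ⟨i, hi⟩
      · subst h; exact subset_rfl
      · exact (ih i hi).trans (by
          intro p hp
          exact Set.mem_insert_iff.2 (Or.inr (Set.mem_iUnion.2 ⟨i, hp⟩)))

lemma root_mem_termSyms {F : Set (Sym L)} {t : GTerm L} (h : rootIn F t) {α : Type} :
    ∃ p ∈ F, p ∈ termSyms (GTerm.cast (α := α) t) := by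
  cases t with
  | var e => exact e.elim
  | func f ts =>
      refine ⟨⟨_, f⟩, h, ?_⟩
      simp only [GTerm.cast, Term.relabel, termSyms]
      exact Set.mem_insert _ _

lemma mem_clausesSyms {K : Set (Clause L)} {C : Clause L} (hC : C ∈ K)
    {l : Lit L (Fin C.nvars)} (hl : l ∈ C.lits) {s : L.Term (Fin C.nvars)}
    (hs : s ∈ Lit.terms l) {p : Sym L} (hp : p ∈ termSyms s) : p ∈ ClausesSyms K := by
  refine Set.mem_iUnion.2 ⟨C, Set.mem_iUnion.2 ⟨hC, ?_⟩⟩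
  refine Set.mem_iUnion.2 ⟨l, Set.mem_iUnion.2 ⟨hl, ?_⟩⟩
  exact Set.mem_iUnion.2 ⟨s, Set.mem_iUnion.2 ⟨hs, hp⟩⟩

lemma lit_realize_subst (M : Type) (S : L.Structure M) {n : ℕ}
    (σ : Fin n → GTerm L) (l : Lit L (Fin n)) :
    Lit.Realize M S (fun e : Empty => e.elim) (Lit.subst σ l) ↔
      Lit.Realize M S (fun i => GVal M S (σ i)) l := by
  cases l <;>
    simp [Lit.Realize, Lit.subst, TVal_eq, Term.realize_subst, GVal]

lemma gclauseHolds_instantiate (M : Type) (S : L.Structure M) (C : Clause L)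
    (hC : ClauseHolds M S C) (σ : Fin C.nvars → GTerm L) :
    GClauseHolds M S (C.instantiate σ) := by
  obtain ⟨l, hl, hreal⟩ := hC (fun i => GVal M S (σ i))
  exact ⟨Lit.subst σ l, List.mem_map.2 ⟨l, hl, rfl⟩,
    (lit_realize_subst M S σ l).2 hreal⟩

lemma modelsK_empty (M : Type) (S : L.Structure M) : ModelsK M S (∅ : Set (Clause L)) :=
  fun _ h => absurd h (Set.notMem_empty _)

lemma modelsK_union {M : Type} {S : L.Structure M} {K1 K2 : Set (Clause L)}
    (h1 : ModelsK M S K1) (h2 : ModelsK M S K2) : ModelsK M S (K1 ∪ K2) := by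
  intro C hC
  rcases hC with hC | hC
  · exact h1 C hC
  · exact h2 C hC

/-- A model of `K` satisfies any set of ground instances of clauses of `K`. -/
lemma modelsG_instancesIn {M : Type} {S : L.Structure M} {K : Set (Clause L)}
    (hK : ModelsK M S K) (F : Set (Sym L)) (Tt : Set (GTerm L)) :
    ModelsG M S (instancesIn F K Tt) := by
  rintro D ⟨C, hC, σ, rfl, -⟩
  exact gclauseHolds_instantiate M S C (hK C hC) σ

end Aux

/-- Let `T0 ⊆ T0 ∪ K1 ⊆ T0 ∪ K1 ∪ K2` be a chain of local theory
extensions (extension symbols `Sig1` resp. `Sig2`), where `K1` and `K2` are sets of flat and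
linear clauses.  Then `T0 ∪ K1 ⊆ T0 ∪ K1 ∪ K2` is a local theory extension. -/
theorem chain_second_extension_local
    (L : FirstOrder.Language.{0, 0})
    (F0 Sig1 Sig2 : Set (Sym L))
    (hd01 : Disjoint F0 Sig1) (hd02 : Disjoint F0 Sig2) (hd12 : Disjoint Sig1 Sig2)
    (T0 : L.Theory) (hT0 : theorySyms T0 ⊆ F0)
    (K1 K2 : Set (Clause L))
    (hK1syms : ClausesSyms K1 ⊆ F0 ∪ Sig1)
    (hK2syms : ClausesSyms K2 ⊆ F0 ∪ Sig1 ∪ Sig2)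
    (hK1flat : ∀ C ∈ K1, C.Flat Sig1) (hK1lin : ∀ C ∈ K1, C.Linear Sig1)
    (hK2flat : ∀ C ∈ K2, C.Flat Sig2) (hK2lin : ∀ C ∈ K2, C.Linear Sig2)
    -- the chain `T0 ⊆ T0 ∪ K1 ⊆ T0 ∪ K1 ∪ K2` consists of local theory extensions:
    (hloc1 : LocalExt Sig1 T0 K1)
    (hloc12 : LocalExt (Sig1 ∪ Sig2) T0 (K1 ∪ K2)) :
    LocalExt2 Sig2 T0 K1 K2 := by
  intro G hGfin
  have hmono : ∀ t : GTerm L, rootIn Sig2 t → rootIn (Sig1 ∪ Sig2) t := by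
    intro t h
    cases t with
    | var e => exact e.elim
    | func f ts => exact Set.mem_union_right _ h
  constructor
  · -- hard direction
    intro hA hB
    obtain ⟨M, hne, S, hT, hK1mod, hG'⟩ := hB
    have hGmod : ModelsG M S G := fun C hC => hG' C (Or.inr hC)
    have hInst2 : ModelsG M S (instancesIn Sig2 K2 (estKG Sig2 K2 G)) :=
      fun C hC => hG' C (Or.inl hC)
    -- the big extension is local:
    have h12 := (hloc12 G hGfin).mp (by
      rintro ⟨N, hneN, SN, hTN, -, hKN, hGN⟩
      exact hA ⟨N, hneN, SN, hTN, fun C hC => hKN C (Or.inl hC),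
        fun C hC => hKN C (Or.inr hC), hGN⟩)
    refine h12 ⟨M, hne, S, hT, modelsK_empty M S, ?_⟩
    rintro D (⟨C, hC, σ, rfl, hcond⟩ | hDG)
    · rcases hC with hC1 | hC2
      · exact gclauseHolds_instantiate M S C (hK1mod C hC1) σ
      · refine hInst2 _ ⟨C, hC2, σ, rfl, ?_⟩
        intro t ht hroot2
        obtain ⟨hr12, hcase⟩ := hcond t ht (hmono t hroot2)
        refine ⟨hroot2, ?_⟩
        rcases hcase with ⟨C', hC', l, hl, s, hs, hsub⟩ | hGcase
        · rcases hC' with hC'1 | hC'2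
          · -- impossible: a Σ₂-rooted term cannot occur in K1
            exfalso
            obtain ⟨p, hpSig2, hpmem⟩ := root_mem_termSyms hroot2
            have hp : p ∈ ClausesSyms K1 :=
              mem_clausesSyms hC'1 hl hs (termSyms_subterm hsub hpmem)
            rcases hK1syms hp with hp0 | hp1
            · exact Set.disjoint_left.mp hd02 hp0 hpSig2
            · exact Set.disjoint_left.mp hd12 hp1 hpSig2
          · exact Or.inl ⟨C', hC'2, l, hl, s, hs, hsub⟩
        · exact Or.inr hGcase
    · exact hGmod D hDG
  · -- easy direction: a model of K2 satisfies all its instances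
    intro hB hA
    obtain ⟨M, hne, S, hT, hK1mod, hK2mod, hGmod⟩ := hA
    refine hB ⟨M, hne, S, hT, hK1mod, ?_⟩
    rintro D (hD | hD)
    · exact modelsG_instancesIn hK2mod _ _ D hD
    · exact hGmod D hD

end PaperSE
end

section
/- Let Π = (Σ, ∅) be a signature consisting only of function symbols, φ a Π^C-formula, and C_s ⊆ C a set of constants occurring in φ. Then there exists a UIF_Σ-uniform interpolant ψ of φ w.r.t. C_s which contains only function symbols occurring in φ. -/
/- Common framework: first-order signatures with designated sets of interpreted symbols,
uninterpreted (extension) function symbols and fresh constants, clauses, flatness/linearity,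
instances, locality of theory extensions, (general) uniform interpolants, and a semantic
specification of the symbol-elimination Algorithm 1 of the paper. -/

open FirstOrder FirstOrder.Language

namespace PaperSE

variable {L : FirstOrder.Language.{0, 0}}

/-! ### Auxiliary lemmas on subterms and symbols -/

lemma self_mem_subterms {α : Type} (t : L.Term α) : t ∈ subterms t := by
  cases t with
  | var a => simp [subterms]
  | func f ts => simp [subterms]

lemma subterms_trans {α : Type} {t : L.Term α} :
    ∀ {u s : L.Term α}, u ∈ subterms t → s ∈ subterms u → s ∈ subterms t := by
  induction t with
  | var a =>
    intro u s hu hs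
    simp only [subterms, Set.mem_singleton_iff] at hu
    subst hu
    simpa [subterms] using hs
  | func f ts ih =>
    intro u s hu hs
    simp only [subterms, Set.mem_insert_iff, Set.mem_iUnion] at hu ⊢
    rcases hu with rfl | ⟨i, hi⟩
    · simpa [subterms] using hs
    · exact Or.inr ⟨i, ih i hi hs⟩

lemma subterms_finite {α : Type} (t : L.Term α) : (subterms t).Finite := by
  induction t with
  | var a => simp [subterms]
  | func f ts ih =>
    simp only [subterms]
    exact (Set.finite_iUnion ih).insert _

lemma termSyms_finite {α : Type} (t : L.Term α) : (termSyms t).Finite := by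
  induction t with
  | var a => simp [termSyms]
  | func f ts ih =>
    simp only [termSyms]
    exact (Set.finite_iUnion ih).insert _

lemma termSyms_subterms {α : Type} {t : L.Term α} :
    ∀ {u : L.Term α}, u ∈ subterms t → termSyms u ⊆ termSyms t := by
  induction t with
  | var a =>
    intro u hu
    simp only [subterms, Set.mem_singleton_iff] at hu
    subst hu
    exact subset_rfl
  | func f ts ih =>
    intro u hu
    simp only [subterms, Set.mem_insert_iff, Set.mem_iUnion] at hu
    rcases hu with rfl | ⟨i, hi⟩
    · exact subset_rfl
    · refine (ih i hi).trans ?_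
      intro p hp
      simp only [termSyms, Set.mem_insert_iff, Set.mem_iUnion]
      exact Or.inr ⟨i, hp⟩

lemma termSyms_relabel {α β : Type} (g : α → β) (t : L.Term α) :
    termSyms (t.relabel g) = termSyms t := by
  induction t with
  | var a => simp [termSyms, Term.relabel]
  | func f ts ih =>
    simp only [Term.relabel, termSyms]
    congr 1
    exact Set.iUnion_congr ih

lemma mem_termSyms_func {α : Type} {n : ℕ} (f : L.Functions n) (ts : Fin n → L.Term α) :
    (⟨n, f⟩ : Sym L) ∈ termSyms (Term.func f ts) := by
  simp [termSyms]

lemma termSyms_arg_subset {α : Type} {n : ℕ} (f : L.Functions n) (ts : Fin n → L.Term α)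
    (i : Fin n) : termSyms (ts i) ⊆ termSyms (Term.func f ts) := by
  intro p hp
  simp only [termSyms, Set.mem_insert_iff, Set.mem_iUnion]
  exact Or.inr ⟨i, hp⟩

lemma cast_arg_mem_subterms {β : Type} {n : ℕ} (f : L.Functions n) (ts : Fin n → GTerm L)
    (i : Fin n) :
    (GTerm.cast (ts i) : L.Term β) ∈ subterms (GTerm.cast (Term.func f ts) : L.Term β) := by
  simp only [GTerm.cast, Term.relabel, subterms, Set.mem_insert_iff, Set.mem_iUnion]
  exact Or.inr ⟨i, self_mem_subterms _⟩

lemma cast_injective {α : Type} : Function.Injective (GTerm.cast (L := L) (α := α)) := by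
  suffices h : ∀ g g' : GTerm L, GTerm.cast (α := α) g = GTerm.cast g' → g = g' from
    fun a b => h a b
  intro g
  induction g with
  | var e => exact e.elim
  | func f ts ih =>
    intro g' h
    cases g' with
    | var e => exact e.elim
    | func f' ts' =>
      simp only [GTerm.cast, Term.relabel] at h
      obtain ⟨rfl, hf, hts⟩ := Term.func.inj h
      subst hf
      congr 1
      funext i
      exact ih i (ts' i) (congrFun (eq_of_heq hts) i)

/-- Every term over `Empty ⊕ Fin 0` is the cast of a ground term. -/
def unground (t : L.Term (Empty ⊕ Fin 0)) : GTerm L :=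
  t.relabel (Sum.elim id Fin.elim0)

lemma cast_unground (t : L.Term (Empty ⊕ Fin 0)) : GTerm.cast (unground t) = t := by
  have h : (Empty.elim ∘ Sum.elim id Fin.elim0 : Empty ⊕ Fin 0 → Empty ⊕ Fin 0) = id := by
    funext x
    rcases x with e | i
    · exact e.elim
    · exact i.elim0
  simp only [GTerm.cast, unground, Term.relabel_relabel, h, Term.relabel_id]

lemma termSyms_unground (t : L.Term (Empty ⊕ Fin 0)) : termSyms (unground t) = termSyms t := by
  conv_rhs => rw [← cast_unground t]
  rw [GTerm.cast, termSyms_relabel]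

/-! ### Ground terms of formulas -/

lemma bfGTerms_finite {α : Type} : ∀ {n : ℕ} (χ : L.BoundedFormula α n), (bfGTerms χ).Finite := by
  intro n χ
  induction χ with
  | falsum => simp [bfGTerms]
  | equal t u =>
    have : bfGTerms (BoundedFormula.equal t u) =
        GTerm.cast ⁻¹' (subterms t ∪ subterms u) := by
      ext g
      simp [bfGTerms]
    rw [this]
    exact ((subterms_finite t).union (subterms_finite u)).preimage cast_injective.injOn
  | rel R ts =>
    have : bfGTerms (BoundedFormula.rel R ts) = GTerm.cast ⁻¹' (⋃ i, subterms (ts i)) := by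
      ext g
      simp [bfGTerms]
    rw [this]
    exact (Set.finite_iUnion fun i => subterms_finite (ts i)).preimage cast_injective.injOn
  | imp f g ihf ihg => exact ihf.union ihg
  | all f ih => exact ih

lemma bfGTerms_closed {α : Type} : ∀ {m : ℕ} (χ : L.BoundedFormula α m) {n : ℕ}
    (f : L.Functions n) (ts : Fin n → GTerm L),
    Term.func f ts ∈ bfGTerms χ → ∀ i, ts i ∈ bfGTerms χ := by
  intro m χ
  induction χ with
  | falsum => intro n f ts h i; simp [bfGTerms] at h
  | equal t u =>
    intro n f ts h i
    simp only [bfGTerms, Set.mem_setOf_eq] at h ⊢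
    rcases h with h | h
    · exact Or.inl (subterms_trans h (cast_arg_mem_subterms f ts i))
    · exact Or.inr (subterms_trans h (cast_arg_mem_subterms f ts i))
  | rel R us =>
    intro n f ts h i
    simp only [bfGTerms, Set.mem_setOf_eq] at h ⊢
    obtain ⟨j, hj⟩ := h
    exact ⟨j, subterms_trans hj (cast_arg_mem_subterms f ts i)⟩
  | imp f g ihf ihg =>
    intro n f' ts h i
    rcases h with h | h
    · exact Or.inl (ihf f' ts h i)
    · exact Or.inr (ihg f' ts h i)
  | all f ih => exact ih

lemma termSyms_cast {β : Type} (g : GTerm L) :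
    termSyms (GTerm.cast g : L.Term β) = termSyms g :=
  termSyms_relabel _ g

lemma bfGTerms_syms {α : Type} : ∀ {m : ℕ} (χ : L.BoundedFormula α m) {g : GTerm L},
    g ∈ bfGTerms χ → termSyms g ⊆ bfSyms χ := by
  intro m χ
  induction χ with
  | falsum => intro g h; simp [bfGTerms] at h
  | equal t u =>
    intro g h
    rcases h with h | h
    · have h2 := termSyms_subterms h
      rw [termSyms_cast] at h2
      exact h2.trans Set.subset_union_left
    · have h2 := termSyms_subterms h
      rw [termSyms_cast] at h2
      exact h2.trans Set.subset_union_right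
  | rel R us =>
    intro g h
    obtain ⟨i, hi⟩ := h
    have h2 := termSyms_subterms hi
    rw [termSyms_cast] at h2
    exact h2.trans (Set.subset_iUnion (fun i => termSyms (us i)) i)
  | imp f g ihf ihg =>
    intro g' h
    rcases h with h | h
    · exact (ihf h).trans Set.subset_union_left
    · exact (ihg h).trans Set.subset_union_right
  | all f ih => exact ih

/-! ### Semantic helper lemmas -/

lemma GVal_func {n : ℕ} (K : Type) (SK : L.Structure K) (f : L.Functions n)
    (ts : Fin n → GTerm L) :
    GVal K SK (Term.func f ts) = FunM K SK f (fun i => GVal K SK (ts i)) := rfl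

lemma GVal_empty_val (K : Type) (SK : L.Structure K) (w : Empty → K) (t : GTerm L) :
    TVal K SK w t = GVal K SK t := by
  have : w = fun e : Empty => e.elim := funext fun e => e.elim
  rw [this]
  rfl

/-- Evaluation of a variable-free term. -/
lemma TVal_ground (K : Type) (SK : L.Structure K) (w : Empty ⊕ Fin 0 → K)
    (t : L.Term (Empty ⊕ Fin 0)) : TVal K SK w t = GVal K SK (unground t) := by
  conv_lhs => rw [← cast_unground t]
  show TVal K SK w (Term.relabel Empty.elim (unground t)) = _
  letI := SK
  show Term.realize w (Term.relabel Empty.elim (unground t)) = _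
  rw [Term.realize_relabel]
  exact GVal_empty_val K SK _ _

/-- `BoundedFormula.Realize` with the structure passed explicitly. -/
def BReal (K : Type) (SK : L.Structure K) (χ : L.BoundedFormula Empty 0)
    (xs : Fin 0 → K) : Prop := by
  letI := SK
  exact χ.Realize (fun e : Empty => e.elim) xs

lemma realizeSent_eq_breal (K : Type) (SK : L.Structure K) (χ : L.Sentence) :
    RealizeSent K SK χ ↔ BReal K SK χ default := Iff.rfl

lemma BReal_bot (K : Type) (SK : L.Structure K) (xs : Fin 0 → K) :
    BReal K SK ⊥ xs ↔ False := by
  letI := SK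
  exact BoundedFormula.realize_bot

lemma BReal_falsum (K : Type) (SK : L.Structure K) (xs : Fin 0 → K) :
    BReal K SK BoundedFormula.falsum xs ↔ False :=
  BReal_bot K SK xs

lemma BReal_imp (K : Type) (SK : L.Structure K) (f g : L.BoundedFormula Empty 0)
    (xs : Fin 0 → K) : BReal K SK (f.imp g) xs ↔ (BReal K SK f xs → BReal K SK g xs) := by
  letI := SK
  exact BoundedFormula.realize_imp

lemma BReal_not (K : Type) (SK : L.Structure K) (f : L.BoundedFormula Empty 0)
    (xs : Fin 0 → K) : BReal K SK f.not xs ↔ ¬ BReal K SK f xs := by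
  letI := SK
  exact BoundedFormula.realize_not

lemma BReal_equal (K : Type) (SK : L.Structure K) (t u : L.Term (Empty ⊕ Fin 0))
    (xs : Fin 0 → K) :
    BReal K SK (BoundedFormula.equal t u) xs ↔
      GVal K SK (unground t) = GVal K SK (unground u) := by
  letI := SK
  show (Term.bdEqual t u).Realize _ _ ↔ _
  rw [BoundedFormula.realize_bdEqual]
  constructor
  · intro h
    rw [← TVal_ground K SK (Sum.elim (fun e : Empty => e.elim) xs) t,
      ← TVal_ground K SK (Sum.elim (fun e : Empty => e.elim) xs) u]
    exact h
  · intro h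
    have h1 := TVal_ground K SK (Sum.elim (fun e : Empty => e.elim) xs) t
    have h2 := TVal_ground K SK (Sum.elim (fun e : Empty => e.elim) xs) u
    show TVal K SK _ t = TVal K SK _ u
    rw [h1, h2, h]

lemma BReal_foldr_inf (K : Type) (SK : L.Structure K) (l : List (L.BoundedFormula Empty 0))
    (xs : Fin 0 → K) :
    BReal K SK (l.foldr (· ⊓ ·) ⊤) xs ↔ ∀ χ ∈ l, BReal K SK χ xs := by
  letI := SK
  exact BoundedFormula.realize_foldr_inf l _ _

lemma BReal_foldr_sup (K : Type) (SK : L.Structure K) (l : List (L.BoundedFormula Empty 0))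
    (xs : Fin 0 → K) :
    BReal K SK (l.foldr (· ⊔ ·) ⊥) xs ↔ ∃ χ ∈ l, BReal K SK χ xs := by
  letI := SK
  exact BoundedFormula.realize_foldr_sup l _ _

/-! ### Symbols of built formulas -/

lemma inf_def' {α : Type} {n : ℕ} (f g : L.BoundedFormula α n) :
    f ⊓ g = ((f.imp (g.imp BoundedFormula.falsum)).imp BoundedFormula.falsum) := rfl

lemma sup_def' {α : Type} {n : ℕ} (f g : L.BoundedFormula α n) :
    f ⊔ g = ((f.imp BoundedFormula.falsum).imp g) := rfl

lemma top_def' {α : Type} {n : ℕ} :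
    (⊤ : L.BoundedFormula α n) = (BoundedFormula.falsum.imp BoundedFormula.falsum) := rfl

lemma bfSyms_inf {α : Type} {n : ℕ} (f g : L.BoundedFormula α n) :
    bfSyms (f ⊓ g) = bfSyms f ∪ bfSyms g := by
  rw [inf_def']
  simp [bfSyms]

lemma bfSyms_sup {α : Type} {n : ℕ} (f g : L.BoundedFormula α n) :
    bfSyms (f ⊔ g) = bfSyms f ∪ bfSyms g := by
  rw [sup_def']
  simp [bfSyms]

lemma bfSyms_not {α : Type} {n : ℕ} (f : L.BoundedFormula α n) :
    bfSyms f.not = bfSyms f := by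
  show bfSyms (f.imp _) = _
  simp [bfSyms]

lemma bfSyms_top {α : Type} {n : ℕ} : bfSyms (⊤ : L.BoundedFormula α n) = ∅ := by
  rw [top_def']
  simp [bfSyms]

lemma bfSyms_foldr_inf {Y : Set (Sym L)} :
    ∀ (l : List (L.BoundedFormula Empty 0)), (∀ χ ∈ l, bfSyms χ ⊆ Y) →
      bfSyms (l.foldr (· ⊓ ·) ⊤) ⊆ Y := by
  intro l
  induction l with
  | nil => intro _; simp [bfSyms_top]
  | cons a l ih =>
    intro h
    rw [List.foldr_cons, bfSyms_inf]
    exact Set.union_subset (h a (by simp)) (ih fun χ hχ => h χ (by simp [hχ]))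

lemma bfSyms_foldr_sup {Y : Set (Sym L)} :
    ∀ (l : List (L.BoundedFormula Empty 0)), (∀ χ ∈ l, bfSyms χ ⊆ Y) →
      bfSyms (l.foldr (· ⊔ ·) ⊥) ⊆ Y := by
  intro l
  induction l with
  | nil => intro _; simp [bfSyms]
  | cons a l ih =>
    intro h
    rw [List.foldr_cons, bfSyms_sup]
    exact Set.union_subset (h a (by simp)) (ih fun χ hχ => h χ (by simp [hχ]))

lemma isQF_foldr_inf : ∀ (l : List (L.BoundedFormula Empty 0)),
    (∀ χ ∈ l, χ.IsQF) → (l.foldr (· ⊓ ·) ⊤).IsQF := by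
  intro l
  induction l with
  | nil => intro _; exact BoundedFormula.IsQF.top
  | cons a l ih =>
    intro h
    rw [List.foldr_cons]
    exact (h a (by simp)).inf (ih fun χ hχ => h χ (by simp [hχ]))

lemma isQF_foldr_sup : ∀ (l : List (L.BoundedFormula Empty 0)),
    (∀ χ ∈ l, χ.IsQF) → (l.foldr (· ⊔ ·) ⊥).IsQF := by
  intro l
  induction l with
  | nil => intro _; exact BoundedFormula.isQF_bot
  | cons a l ih =>
    intro h
    rw [List.foldr_cons]
    exact (h a (by simp)).sup (ih fun χ hχ => h χ (by simp [hχ]))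

/-! ### The ground equality atom -/

/-- The sentence `s = t` for ground terms `s`, `t`. -/
def eqS (s t : GTerm L) : L.Sentence :=
  BoundedFormula.equal (GTerm.cast s) (GTerm.cast t)

lemma isQF_eqS (s t : GTerm L) : (eqS s t).IsQF :=
  (BoundedFormula.IsAtomic.equal _ _).isQF

lemma bfSyms_eqS (s t : GTerm L) : bfSyms (eqS s t) = termSyms s ∪ termSyms t := by
  show termSyms (GTerm.cast s) ∪ termSyms (GTerm.cast t) = _
  rw [GTerm.cast, GTerm.cast, termSyms_relabel, termSyms_relabel]

lemma unground_cast (s : GTerm L) : unground (GTerm.cast s) = s :=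
  cast_injective (cast_unground _)

lemma BReal_eqS (K : Type) (SK : L.Structure K) (s t : GTerm L) (xs : Fin 0 → K) :
    BReal K SK (eqS s t) xs ↔ GVal K SK s = GVal K SK t := by
  rw [eqS, BReal_equal, unground_cast, unground_cast]

/-! ### Bounded-depth ground terms over a symbol set -/

def SS (A : Set (Sym L)) : ℕ → Set (GTerm L)
  | 0 => ∅
  | (k + 1) =>
    {t | ∃ (n : ℕ) (f : L.Functions n) (ts : Fin n → GTerm L),
      t = Term.func f ts ∧ (⟨n, f⟩ : Sym L) ∈ A ∧ ∀ i, ts i ∈ SS A k}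

lemma SS_mono (A : Set (Sym L)) : ∀ k, SS A k ⊆ SS A (k + 1) := by
  intro k
  induction k with
  | zero => simp [SS]
  | succ k ih =>
    intro t ht
    obtain ⟨n, f, ts, rfl, hf, hts⟩ := ht
    exact ⟨n, f, ts, rfl, hf, fun i => ih (hts i)⟩

lemma SS_le (A : Set (Sym L)) {k m : ℕ} (h : k ≤ m) : SS A k ⊆ SS A m := by
  induction h with
  | refl => exact subset_rfl
  | step _ ih => exact ih.trans (SS_mono A _)

lemma SS_syms (A : Set (Sym L)) : ∀ k (t : GTerm L), t ∈ SS A k → termSyms t ⊆ A := by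
  intro k
  induction k with
  | zero => simp [SS]
  | succ k ih =>
    intro t ht
    obtain ⟨n, f, ts, rfl, hf, hts⟩ := ht
    intro p hp
    simp only [termSyms, Set.mem_insert_iff, Set.mem_iUnion] at hp
    rcases hp with rfl | ⟨i, hi⟩
    · exact hf
    · exact ih (ts i) (hts i) hi

lemma SS_finite {A : Set (Sym L)} (hA : A.Finite) : ∀ k, (SS A k).Finite := by
  intro k
  induction k with
  | zero => simp [SS]
  | succ k ih =>
    have hsub : SS A (k + 1) ⊆
        ⋃ p ∈ A, (fun ts => Term.func p.2 ts) '' (Set.pi Set.univ fun _ : Fin p.1 => SS A k) := by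
      intro t ht
      obtain ⟨n, f, ts, rfl, hf, hts⟩ := ht
      refine Set.mem_biUnion hf ?_
      exact ⟨ts, by simpa using hts, rfl⟩
    refine Set.Finite.subset ?_ hsub
    refine hA.biUnion fun p _ => ?_
    exact (Set.Finite.pi fun _ => ih).image _

/-! ### A fixpoint lemma for monotone operators on subsets of a finite set -/

lemma iterate_fixed_of_finite {β : Type} (F : Set β → Set β)
    (hm : ∀ X Y : Set β, X ⊆ Y → F X ⊆ F Y)
    (T : Set β) (hT : T.Finite) (hFT : ∀ X, F X ⊆ T) :
    ∃ k ≤ T.ncard, F (F^[k] ∅) = F^[k] ∅ := by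
  by_contra hcon
  push_neg at hcon
  have hchain : ∀ k, F^[k] (∅ : Set β) ⊆ F^[k + 1] ∅ := by
    intro k
    induction k with
    | zero => simp
    | succ k ih =>
      rw [Function.iterate_succ_apply', Function.iterate_succ_apply']
      exact hm _ _ ih
  have hsubT : ∀ k, F^[k] (∅ : Set β) ⊆ T := by
    intro k
    cases k with
    | zero => simp
    | succ k => rw [Function.iterate_succ_apply']; exact hFT _
  have hfin : ∀ k, (F^[k] (∅ : Set β)).Finite := fun k => hT.subset (hsubT k)
  have hcard : ∀ k, k ≤ T.ncard + 1 → k ≤ (F^[k] (∅ : Set β)).ncard := by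
    intro k
    induction k with
    | zero => simp
    | succ k ih =>
      intro hk
      have hk' : k ≤ T.ncard := by omega
      have hne := hcon k hk'
      have hss : F^[k] (∅ : Set β) ⊂ F^[k + 1] ∅ := by
        refine ssubset_of_subset_of_ne (hchain k) ?_
        rw [Function.iterate_succ_apply']
        exact fun h => hne h.symm
      have hlt := Set.ncard_lt_ncard hss (hfin (k + 1))
      have := ih (by omega)
      omega
  have h1 := hcard (T.ncard + 1) le_rfl
  have h2 : (F^[T.ncard + 1] (∅ : Set β)).ncard ≤ T.ncard :=
    Set.ncard_le_ncard (hsubT _) hT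
  omega

/-! ### The representation machinery -/

def symsOfT (T : Set (GTerm L)) : Set (Sym L) := ⋃ t ∈ T, termSyms t

lemma symsOfT_bfGTerms {α : Type} {m : ℕ} (χ : L.BoundedFormula α m) :
    symsOfT (bfGTerms χ) ⊆ bfSyms χ := by
  intro p hp
  simp only [symsOfT, Set.mem_iUnion] at hp
  obtain ⟨t, ht, hpt⟩ := hp
  exact bfGTerms_syms χ ht hpt

/-- The set of "shared" ground terms of bounded depth used in the interpolant. -/
def SstarOf (T : Set (GTerm L)) (Cbad : Set (Sym L)) : Set (GTerm L) :=
  SS (symsOfT T \ Cbad) (T.ncard + 1)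

lemma SstarOf_finite {T : Set (GTerm L)} (hT : T.Finite) (Cbad : Set (Sym L)) :
    (SstarOf T Cbad).Finite := by
  have hsyms : (symsOfT T \ Cbad).Finite :=
    Set.Finite.diff (hT.biUnion fun t _ => termSyms_finite t)
  exact SS_finite hsyms _

lemma SstarOf_syms {T : Set (GTerm L)} {Cbad : Set (Sym L)} {t : GTerm L}
    (h : t ∈ SstarOf T Cbad) : termSyms t ⊆ symsOfT T \ Cbad :=
  SS_syms _ _ t h

/-- One step of the reachability operator. -/
def ReachStep (T : Set (GTerm L)) (Cbad : Set (Sym L)) (N : Type) (SN : L.Structure N)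
    (X : Set (GTerm L)) : Set (GTerm L) :=
  {t | t ∈ T ∧ ∃ (n : ℕ) (f : L.Functions n) (ts : Fin n → GTerm L),
      Term.func f ts ∈ T ∧ GVal N SN (Term.func f ts) = GVal N SN t ∧
      (⟨n, f⟩ : Sym L) ∉ Cbad ∧ ∀ i, ts i ∈ X}

lemma ReachStep_mono (T : Set (GTerm L)) (Cbad : Set (Sym L)) (N : Type)
    (SN : L.Structure N) : ∀ X Y : Set (GTerm L), X ⊆ Y →
      ReachStep T Cbad N SN X ⊆ ReachStep T Cbad N SN Y := by
  intro X Y hXY t ht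
  obtain ⟨htT, n, f, ts, h1, h2, h3, h4⟩ := ht
  exact ⟨htT, n, f, ts, h1, h2, h3, fun i => hXY (h4 i)⟩

lemma reach_represented (T : Set (GTerm L)) (Cbad : Set (Sym L)) (N : Type)
    (SN : L.Structure N) : ∀ k, ∀ t ∈ (ReachStep T Cbad N SN)^[k] ∅,
      ∃ s ∈ SS (symsOfT T \ Cbad) k, GVal N SN s = GVal N SN t := by
  intro k
  induction k with
  | zero => simp
  | succ k ih =>
    intro t ht
    rw [Function.iterate_succ_apply'] at ht
    obtain ⟨htT, n, f, ts, hfT, hval, hnc, hts⟩ := ht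
    choose s hs hval2 using fun i => ih (ts i) (hts i)
    refine ⟨Term.func f s, ⟨n, f, s, rfl, ⟨?_, hnc⟩, hs⟩, ?_⟩
    · exact Set.mem_biUnion hfT (mem_termSyms_func f ts)
    · simp only [GVal_func] at hval ⊢
      rw [← hval]
      congr 1
      funext i
      exact hval2 i

/-! ### The amalgamated structure -/

open Classical in
noncomputable def vmap (M N : Type) (SM : L.Structure M) (SN : L.Structure N)
    (R : Set (GTerm L)) (rp : GTerm L → GTerm L) (t : GTerm L) : M ⊕ N :=
  if t ∈ R then Sum.inl (GVal M SM (rp t)) else Sum.inr (GVal N SN t)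

open Classical in
noncomputable def mkFun (M N : Type) (SM : L.Structure M) (hM : Nonempty M)
    (T : Set (GTerm L)) (v : GTerm L → M ⊕ N)
    {n : ℕ} (f : L.Functions n) (x : Fin n → M ⊕ N) : M ⊕ N :=
  if h : ∃ t, t ∈ T ∧ ∃ ts : Fin n → GTerm L, t = Term.func f ts ∧ ∀ i, x i = v (ts i)
  then v h.choose
  else if h2 : ∀ i, ∃ m, x i = Sum.inl m then Sum.inl (FunM M SM f fun i => (h2 i).choose)
  else Sum.inl hM.some

noncomputable def mkStruct (M N : Type) (SM : L.Structure M) (hM : Nonempty M)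
    (T : Set (GTerm L)) (v : GTerm L → M ⊕ N) : L.Structure (M ⊕ N) where
  funMap := fun {_} f x => mkFun M N SM hM T v f x
  RelMap := fun {_} _ _ => False

lemma mem_SstarOf {T : Set (GTerm L)} {Cbad : Set (Sym L)} {n : ℕ}
    (f : L.Functions n) (ts : Fin n → GTerm L)
    (hf : (⟨n, f⟩ : Sym L) ∈ symsOfT T \ Cbad)
    (hts : ∀ i, ts i ∈ SS (symsOfT T \ Cbad) T.ncard) :
    Term.func f ts ∈ SstarOf T Cbad :=
  ⟨n, f, ts, rfl, hf, hts⟩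

/-- The central transfer lemma: if `M` and `N` agree on the equalities between the shared
terms in `SstarOf T Cbad`, then there is a structure on `M ⊕ N` which satisfies the same
quantifier-free sentences with ground terms in `T` as `N` does, and the same quantifier-free
sentences avoiding the `Cbad`-constants of `T` as `M` does. -/
lemma transfer
    (hnorel : ∀ (n : ℕ), L.Relations n → False)
    (T : Set (GTerm L)) (hT : T.Finite)
    (hTsub : ∀ {n : ℕ} (f : L.Functions n) (ts : Fin n → GTerm L),
        Term.func f ts ∈ T → ∀ i, ts i ∈ T)
    (Cbad : Set (Sym L)) (hCbad0 : ∀ p ∈ Cbad, p.1 = 0)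
    (M N : Type) (SM : L.Structure M) (SN : L.Structure N) (hM : Nonempty M)
    (agree : ∀ s ∈ SstarOf T Cbad, ∀ s' ∈ SstarOf T Cbad,
        (GVal M SM s = GVal M SM s' ↔ GVal N SN s = GVal N SN s')) :
    ∃ S' : L.Structure (M ⊕ N),
      (∀ (χ : L.Sentence), χ.IsQF → bfGTerms χ ⊆ T →
          (RealizeSent (M ⊕ N) S' χ ↔ RealizeSent N SN χ)) ∧
      (∀ (θ : L.Sentence), θ.IsQF →
          (∀ c : L.Functions 0, (⟨0, c⟩ : Sym L) ∈ Cbad → constT c ∈ T →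
              (⟨0, c⟩ : Sym L) ∉ bfSyms θ) →
          (RealizeSent (M ⊕ N) S' θ ↔ RealizeSent M SM θ)) := by
  classical
  obtain ⟨k, hk, hfix⟩ := iterate_fixed_of_finite (ReachStep T Cbad N SN)
    (ReachStep_mono T Cbad N SN) T hT (fun X t ht => ht.1)
  set A : Set (Sym L) := symsOfT T \ Cbad with hAdef
  set d : ℕ := T.ncard with hddef
  set R : Set (GTerm L) := (ReachStep T Cbad N SN)^[k] ∅ with hRdef
  have hRT : R ⊆ T := by
    rw [hRdef]
    cases k with
    | zero => simp
    | succ k =>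
      rw [Function.iterate_succ_apply']
      exact fun t ht => ht.1
  have hRfix : ReachStep T Cbad N SN R = R := hfix
  have hrepE : ∀ t : GTerm L, ∃ s : GTerm L,
      t ∈ R → s ∈ SS A d ∧ GVal N SN s = GVal N SN t := by
    intro t
    by_cases ht : t ∈ R
    · obtain ⟨s, hs, hsv⟩ := reach_represented T Cbad N SN k t ht
      exact ⟨s, fun _ => ⟨SS_le _ hk hs, hsv⟩⟩
    · exact ⟨t, fun h => absurd h ht⟩
  choose rp hrp using hrepE
  set v : GTerm L → M ⊕ N := vmap M N SM SN R rp with hvdef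
  have hSd : SS A d ⊆ SstarOf T Cbad := SS_mono A d
  have hrpS : ∀ t ∈ R, rp t ∈ SstarOf T Cbad := fun t ht => hSd (hrp t ht).1
  have hvpos : ∀ t ∈ R, v t = Sum.inl (GVal M SM (rp t)) := by
    intro t ht
    rw [hvdef]
    simp only [vmap]
    rw [if_pos ht]
  have hvneg : ∀ t ∉ R, v t = Sum.inr (GVal N SN t) := by
    intro t ht
    rw [hvdef]
    simp only [vmap]
    rw [if_neg ht]
  have hval_closed : ∀ t ∈ R, ∀ u ∈ T, GVal N SN u = GVal N SN t → u ∈ R := by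
    intro t ht u hu he
    rw [← hRfix] at ht ⊢
    obtain ⟨_, n, f, ts, h1, h2, h3, h4⟩ := ht
    exact ⟨hu, n, f, ts, h1, by rw [h2, he], h3, h4⟩
  have hsat : ∀ {n : ℕ} (f : L.Functions n) (ts : Fin n → GTerm L),
      Term.func f ts ∈ T → (⟨n, f⟩ : Sym L) ∉ Cbad → (∀ i, ts i ∈ R) →
      Term.func f ts ∈ R := by
    intro n f ts h1 h2 h3
    rw [← hRfix]
    exact ⟨h1, n, f, ts, h1, rfl, h2, h3⟩
  have hvIff : ∀ t ∈ T, ∀ u ∈ T, (v t = v u ↔ GVal N SN t = GVal N SN u) := by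
    intro t ht u hu
    by_cases h1 : t ∈ R <;> by_cases h2 : u ∈ R
    · rw [hvpos t h1, hvpos u h2]
      constructor
      · intro h
        have h3 := (agree _ (hrpS t h1) _ (hrpS u h2)).1 (Sum.inl.inj h)
        rw [(hrp t h1).2, (hrp u h2).2] at h3
        exact h3
      · intro h
        have h3 : GVal N SN (rp t) = GVal N SN (rp u) := by
          rw [(hrp t h1).2, (hrp u h2).2, h]
        exact congrArg Sum.inl ((agree _ (hrpS t h1) _ (hrpS u h2)).2 h3)
    · rw [hvpos t h1, hvneg u h2]
      constructor
      · intro h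
        exact absurd h (by simp)
      · intro h
        exact absurd (hval_closed t h1 u hu h.symm) h2
    · rw [hvneg t h1, hvpos u h2]
      constructor
      · intro h
        exact absurd h (by simp)
      · intro h
        exact absurd (hval_closed u h2 t ht h) h1
    · rw [hvneg t h1, hvneg u h2]
      exact ⟨fun h => Sum.inr.inj h, fun h => congrArg Sum.inr h⟩
  set S' : L.Structure (M ⊕ N) := mkStruct M N SM hM T v with hS'def
  have hFunM : ∀ {n : ℕ} (f : L.Functions n) (x : Fin n → M ⊕ N),
      FunM (M ⊕ N) S' f x = mkFun M N SM hM T v f x := by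
    intro n f x
    rw [hS'def]
    rfl
  have hwd : ∀ {n : ℕ} (f : L.Functions n) (x : Fin n → M ⊕ N) (t t' : GTerm L),
      (t ∈ T ∧ ∃ ts, t = Term.func f ts ∧ ∀ i, x i = v (ts i)) →
      (t' ∈ T ∧ ∃ ts, t' = Term.func f ts ∧ ∀ i, x i = v (ts i)) → v t = v t' := by
    rintro n f x t t' ⟨ht, ts, rfl, hx⟩ ⟨ht', ts', rfl, hx'⟩
    have harg : ∀ i, GVal N SN (ts i) = GVal N SN (ts' i) := fun i =>
      (hvIff _ (hTsub f ts ht i) _ (hTsub f ts' ht' i)).1 ((hx i).symm.trans (hx' i))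
    refine (hvIff _ ht _ ht').2 ?_
    simp only [GVal_func]
    congr 1
    funext i
    exact harg i
  have hmain : ∀ t : GTerm L, t ∈ T → GVal (M ⊕ N) S' t = v t := by
    intro t
    induction t with
    | var e => exact e.elim
    | func f ts ih =>
      intro ht
      have hx : (fun i => GVal (M ⊕ N) S' (ts i)) = fun i => v (ts i) :=
        funext fun i => ih i (hTsub f ts ht i)
      rw [GVal_func, hFunM, hx]
      have hex : ∃ t', t' ∈ T ∧ ∃ us, t' = Term.func f us ∧
          ∀ i, (fun i => v (ts i)) i = v (us i) := ⟨_, ht, ts, rfl, fun i => rfl⟩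
      simp only [mkFun]
      rw [dif_pos hex]
      exact hwd f _ _ _ hex.choose_spec ⟨ht, ts, rfl, fun _ => rfl⟩
  have hterm3 : ∀ g : GTerm L,
      (∀ c : L.Functions 0, (⟨0, c⟩ : Sym L) ∈ Cbad → constT c ∈ T →
        (⟨0, c⟩ : Sym L) ∉ termSyms g) →
      GVal (M ⊕ N) S' g = Sum.inl (GVal M SM g) := by
    intro g
    induction g with
    | var e => exact e.elim
    | func f ts ih =>
      intro hg
      have hts : (fun i => GVal (M ⊕ N) S' (ts i)) = fun i => Sum.inl (GVal M SM (ts i)) := by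
        funext i
        exact ih i fun c h1 h2 hc => hg c h1 h2 (termSyms_arg_subset f ts i hc)
      rw [GVal_func, hFunM, hts]
      by_cases hex : ∃ t', t' ∈ T ∧ ∃ us, t' = Term.func f us ∧
          ∀ i, (fun i => Sum.inl (GVal M SM (ts i)) : Fin _ → M ⊕ N) i = v (us i)
      · simp only [mkFun]
        rw [dif_pos hex]
        obtain ⟨ht0T, us, ht0eq, hus⟩ := hex.choose_spec
        have husR : ∀ i, us i ∈ R := by
          intro i
          by_contra hR
          have h1 := hus i
          rw [hvneg _ hR] at h1
          exact absurd h1 (by simp)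
        have hfnc : (⟨_, f⟩ : Sym L) ∉ Cbad := by
          intro hc
          have hn0 : _ = 0 := hCbad0 _ hc
          subst hn0
          have hconst : Term.func f us = constT f := by
            rw [constT]
            congr 1
            funext j
            exact j.elim0
          have hcT : constT f ∈ T := by
            rw [← hconst, ← ht0eq]
            exact ht0T
          exact hg f hc hcT (mem_termSyms_func f ts)
        have ht0R : hex.choose ∈ R := by
          rw [ht0eq]
          exact hsat f us (ht0eq ▸ ht0T) hfnc husR
        rw [hvpos _ ht0R]
        congr 1
        have husT : Term.func f us ∈ T := ht0eq ▸ ht0T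
        have hrpus : ∀ i, rp (us i) ∈ SS A d := fun i => (hrp _ (husR i)).1
        have hsstar : Term.func f (fun i => rp (us i)) ∈ SstarOf T Cbad :=
          mem_SstarOf f _ ⟨Set.mem_biUnion husT (mem_termSyms_func f us), hfnc⟩ hrpus
        have hNeq : GVal N SN (Term.func f fun i => rp (us i)) = GVal N SN (rp hex.choose) := by
          rw [(hrp _ ht0R).2, ht0eq]
          simp only [GVal_func]
          congr 1
          funext i
          exact (hrp _ (husR i)).2
        have hMeq := (agree _ hsstar _ (hrpS _ ht0R)).2 hNeq
        have hargs : ∀ i, GVal M SM (rp (us i)) = GVal M SM (ts i) := by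
          intro i
          have h1 := hus i
          rw [hvpos _ (husR i)] at h1
          exact (Sum.inl.inj h1).symm
        rw [← hMeq]
        simp only [GVal_func]
        congr 1
        funext i
        exact hargs i
      · have h2 : ∀ i, ∃ m, (fun i => Sum.inl (GVal M SM (ts i)) : Fin _ → M ⊕ N) i
            = Sum.inl m := fun i => ⟨_, rfl⟩
        simp only [mkFun]
        rw [dif_neg hex, dif_pos h2]
        congr 1
        congr 1
        funext i
        exact (Sum.inl.inj (h2 i).choose_spec).symm
  have hform2 : ∀ (χ : L.BoundedFormula Empty 0), χ.IsQF → bfGTerms χ ⊆ T →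
      ∀ (xs : Fin 0 → M ⊕ N) (xs' : Fin 0 → N),
        (BReal (M ⊕ N) S' χ xs ↔ BReal N SN χ xs') := by
    intro χ hqf
    induction hqf with
    | falsum =>
      intro _ xs xs'
      rw [BReal_falsum, BReal_falsum]
    | of_isAtomic h =>
      cases h with
      | equal t u =>
        intro hsub xs xs'
        rw [show Term.bdEqual t u = BoundedFormula.equal t u from rfl] at hsub ⊢
        rw [BReal_equal, BReal_equal]
        have hgt : unground t ∈ T := by
          refine hsub ?_
          show GTerm.cast (unground t) ∈ subterms t ∨ GTerm.cast (unground t) ∈ subterms u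
          exact Or.inl (by rw [cast_unground]; exact self_mem_subterms t)
        have hgu : unground u ∈ T := by
          refine hsub ?_
          show GTerm.cast (unground u) ∈ subterms t ∨ GTerm.cast (unground u) ∈ subterms u
          exact Or.inr (by rw [cast_unground]; exact self_mem_subterms u)
        rw [hmain _ hgt, hmain _ hgu]
        exact hvIff _ hgt _ hgu
      | rel r ts => exact (hnorel _ r).elim
    | imp h1 h2 ih1 ih2 =>
      intro hsub xs xs'
      rw [BReal_imp, BReal_imp, ih1 (fun g hg => hsub (Set.mem_union_left _ hg)) xs xs',
        ih2 (fun g hg => hsub (Set.mem_union_right _ hg)) xs xs']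
  have hform3 : ∀ (θ : L.BoundedFormula Empty 0), θ.IsQF →
      (∀ c : L.Functions 0, (⟨0, c⟩ : Sym L) ∈ Cbad → constT c ∈ T →
          (⟨0, c⟩ : Sym L) ∉ bfSyms θ) →
      ∀ (xs : Fin 0 → M ⊕ N) (xs' : Fin 0 → M),
        (BReal (M ⊕ N) S' θ xs ↔ BReal M SM θ xs') := by
    intro θ hqf
    induction hqf with
    | falsum =>
      intro _ xs xs'
      rw [BReal_falsum, BReal_falsum]
    | of_isAtomic h =>
      cases h with
      | equal t u =>
        intro hsyms xs xs'
        rw [show Term.bdEqual t u = BoundedFormula.equal t u from rfl] at hsyms ⊢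
        rw [BReal_equal, BReal_equal]
        have h1 : GVal (M ⊕ N) S' (unground t) = Sum.inl (GVal M SM (unground t)) := by
          refine hterm3 _ fun c hc1 hc2 hmem => hsyms c hc1 hc2 ?_
          rw [termSyms_unground] at hmem
          exact Set.mem_union_left _ hmem
        have h2 : GVal (M ⊕ N) S' (unground u) = Sum.inl (GVal M SM (unground u)) := by
          refine hterm3 _ fun c hc1 hc2 hmem => hsyms c hc1 hc2 ?_
          rw [termSyms_unground] at hmem
          exact Set.mem_union_right _ hmem
        rw [h1, h2]
        exact ⟨fun h => Sum.inl.inj h, fun h => congrArg Sum.inl h⟩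
      | rel r ts => exact (hnorel _ r).elim
    | imp h1 h2 ih1 ih2 =>
      intro hsyms xs xs'
      rw [BReal_imp, BReal_imp,
        ih1 (fun c hc1 hc2 hmem => hsyms c hc1 hc2 (Set.mem_union_left _ hmem)) xs xs',
        ih2 (fun c hc1 hc2 hmem => hsyms c hc1 hc2 (Set.mem_union_right _ hmem)) xs xs']
  refine ⟨S', ?_, ?_⟩
  · intro χ hqf hsub
    rw [realizeSent_eq_breal, realizeSent_eq_breal]
    exact hform2 χ hqf hsub default default
  · intro θ hqf hsyms
    rw [realizeSent_eq_breal, realizeSent_eq_breal]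
    exact hform3 θ hqf hsyms default default

/-- Let `Π = (Σ, ∅)` be a signature consisting only of function symbols,
`φ` a ground `Π^C`-formula and `Cs ⊆ C` a set of constants occurring in `φ`.  Then there is a
`UIF_Σ`-uniform interpolant `ψ` of `φ` w.r.t. `Cs` containing only function symbols occurring
in `φ`.  (`UIF_Σ` is the theory of uninterpreted function symbols: the empty theory over the
signature `Σ`; the fresh constants of `C` are the symbols in `CC`.) -/
theorem uniform_interpolant_no_new_functions
    (L : FirstOrder.Language.{0, 0})
    (hnorel : ∀ (n : ℕ), L.Relations n → False)
    (FS CC : Set (Sym L))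
    (hd : Disjoint FS CC) (hcover : FS ∪ CC = Set.univ)
    (hCC0 : ∀ p ∈ CC, p.1 = 0)
    (φ : L.Sentence) (hφ : φ.IsQF)
    (Cs : Set (Sym L)) (hCs : Cs ⊆ CC ∩ sentSyms φ) :
    ∃ ψ : L.Sentence,
      IsUI (L := L) ∅ ∅ CC Cs φ ψ ∧ sentSyms ψ ∩ FS ⊆ sentSyms φ := by
  classical
  set T : Set (GTerm L) := bfGTerms φ with hTdef
  have hTfin : T.Finite := bfGTerms_finite φ
  set Cbad : Set (Sym L) := CC \ Cs with hCbaddef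
  have hCbad0 : ∀ p ∈ Cbad, p.1 = 0 := fun p hp => hCC0 p hp.1
  set Sstar : Set (GTerm L) := SstarOf T Cbad with hSstardef
  have hSfin : Sstar.Finite := SstarOf_finite hTfin Cbad
  set Pairs : Set (GTerm L × GTerm L) := Sstar ×ˢ Sstar with hPairs
  have hPfin : Pairs.Finite := hSfin.prod hSfin
  set plist : List (GTerm L × GTerm L) := hPfin.toFinset.toList with hplist
  have hplist_mem : ∀ p : GTerm L × GTerm L, p ∈ plist ↔ p ∈ Pairs := by
    intro p
    rw [hplist, Finset.mem_toList, Set.Finite.mem_toFinset]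
  set delta : Set (GTerm L × GTerm L) → L.Sentence := fun P =>
    (plist.map fun p => if p ∈ P then eqS p.1 p.2 else (eqS p.1 p.2).not).foldr (· ⊓ ·) ⊤
    with hdelta
  set Rlz : Set (Set (GTerm L × GTerm L)) :=
    {P | P ⊆ Pairs ∧ ∃ (K : Type) (SK : L.Structure K), RealizeSent K SK φ ∧
      {q | q ∈ Pairs ∧ GVal K SK q.1 = GVal K SK q.2} = P} with hRlz
  have hRlzfin : Rlz.Finite := hPfin.finite_subsets.subset fun P hP => hP.1
  set ψ : L.Sentence := (hRlzfin.toFinset.toList.map delta).foldr (· ⊔ ·) ⊥ with hψ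
  have hdelta_real : ∀ (P : Set (GTerm L × GTerm L)) (K : Type) (SK : L.Structure K),
      RealizeSent K SK (delta P) ↔
        ∀ q ∈ Pairs, (q ∈ P ↔ GVal K SK q.1 = GVal K SK q.2) := by
    intro P K SK
    rw [realizeSent_eq_breal, hdelta]
    rw [BReal_foldr_inf]
    constructor
    · intro h q hq
      have hq' := h _ (List.mem_map_of_mem ((hplist_mem q).2 hq))
      by_cases hqP : q ∈ P
      · rw [if_pos hqP, BReal_eqS] at hq'
        exact ⟨fun _ => hq', fun _ => hqP⟩
      · rw [if_neg hqP, BReal_not, BReal_eqS] at hq'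
        exact ⟨fun h' => absurd h' hqP, fun h' => absurd h' hq'⟩
    · intro h χ hχ
      rw [List.mem_map] at hχ
      obtain ⟨q, hq, rfl⟩ := hχ
      have hqP := (hplist_mem q).1 hq
      by_cases hqmem : q ∈ P
      · rw [if_pos hqmem, BReal_eqS]
        exact (h q hqP).1 hqmem
      · rw [if_neg hqmem, BReal_not, BReal_eqS]
        exact fun he => hqmem ((h q hqP).2 he)
  have hψsyms : sentSyms ψ ⊆ symsOfT T \ Cbad := by
    rw [hψ]
    refine bfSyms_foldr_sup _ ?_
    intro χ hχ
    rw [List.mem_map] at hχ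
    obtain ⟨P, _, rfl⟩ := hχ
    rw [hdelta]
    refine bfSyms_foldr_inf _ ?_
    intro χ' hχ'
    rw [List.mem_map] at hχ'
    obtain ⟨q, hq, rfl⟩ := hχ'
    have hqP : q ∈ Pairs := (hplist_mem q).1 hq
    have hq1 : termSyms q.1 ⊆ symsOfT T \ Cbad := SstarOf_syms hqP.1
    have hq2 : termSyms q.2 ⊆ symsOfT T \ Cbad := SstarOf_syms hqP.2
    split_ifs
    · rw [bfSyms_eqS]
      exact Set.union_subset hq1 hq2
    · rw [bfSyms_not, bfSyms_eqS]
      exact Set.union_subset hq1 hq2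
  have hψQF : ψ.IsQF := by
    rw [hψ]
    refine isQF_foldr_sup _ ?_
    intro χ hχ
    rw [List.mem_map] at hχ
    obtain ⟨P, _, rfl⟩ := hχ
    rw [hdelta]
    refine isQF_foldr_inf _ ?_
    intro χ' hχ'
    rw [List.mem_map] at hχ'
    obtain ⟨q, _, rfl⟩ := hχ'
    split_ifs
    · exact isQF_eqS _ _
    · exact (isQF_eqS _ _).not
  have hEnt : EntailsS (L := L) ∅ ∅ φ ψ := by
    intro K SK hne _ _ hφK
    set P := {q | q ∈ Pairs ∧ GVal K SK q.1 = GVal K SK q.2} with hPdef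
    have hPRlz : P ∈ Rlz := ⟨fun q hq => hq.1, K, SK, hφK, rfl⟩
    rw [realizeSent_eq_breal, hψ, BReal_foldr_sup]
    refine ⟨delta P,
      List.mem_map_of_mem (Finset.mem_toList.2 (hRlzfin.mem_toFinset.2 hPRlz)), ?_⟩
    rw [← realizeSent_eq_breal, hdelta_real]
    intro q hq
    exact ⟨fun h => h.2, fun h => ⟨hq, h⟩⟩
  refine ⟨ψ, ⟨hψQF, ?_, hEnt, ?_⟩, ?_⟩
  · -- sentSyms ψ ∩ CC ⊆ Cs
    intro p hp
    have h1 := hψsyms hp.1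
    by_contra hpCs
    exact h1.2 ⟨hp.2, hpCs⟩
  · -- universality
    intro θ hθQF hθsyms hφθ
    intro K SK hne hT0 hK0 hψK
    rw [realizeSent_eq_breal, hψ, BReal_foldr_sup] at hψK
    obtain ⟨χ, hχmem, hχreal⟩ := hψK
    rw [List.mem_map] at hχmem
    obtain ⟨P, hPmem, rfl⟩ := hχmem
    have hPRlz : P ∈ Rlz := hRlzfin.mem_toFinset.1 (Finset.mem_toList.1 hPmem)
    obtain ⟨hPsub, Nt, SN, hNφ, hNpat⟩ := hPRlz
    have hpat := (hdelta_real P K SK).1 ((realizeSent_eq_breal K SK (delta P)).2 hχreal)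
    have agree : ∀ s ∈ SstarOf T Cbad, ∀ s' ∈ SstarOf T Cbad,
        (GVal K SK s = GVal K SK s' ↔ GVal Nt SN s = GVal Nt SN s') := by
      intro s hs s' hs'
      have hqPairs : (s, s') ∈ Pairs := Set.mem_prod.2 ⟨hs, hs'⟩
      have h1 := hpat (s, s') hqPairs
      have h2 : (s, s') ∈ P ↔ GVal Nt SN s = GVal Nt SN s' := by
        rw [← hNpat]
        exact ⟨fun h => h.2, fun h => ⟨hqPairs, h⟩⟩
      exact h1.symm.trans h2
    obtain ⟨S', htr2, htr3⟩ := transfer hnorel T hTfin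
      (fun f ts h i => bfGTerms_closed φ f ts h i) Cbad hCbad0 K Nt SK SN hne agree
    have hφS' : RealizeSent (K ⊕ Nt) S' φ := (htr2 φ hφ subset_rfl).2 hNφ
    have hθS' : RealizeSent (K ⊕ Nt) S' θ :=
      hφθ (K ⊕ Nt) S' ⟨Sum.inl hne.some⟩
        (fun χ' hχ' => absurd hχ' (Set.notMem_empty χ'))
        (fun C hC => absurd hC (Set.notMem_empty C)) hφS'
    refine (htr3 θ hθQF ?_).1 hθS'
    intro c hc1 hc2 hmem
    have hcφ : (⟨0, c⟩ : Sym L) ∈ sentSyms φ :=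
      bfGTerms_syms φ hc2 (mem_termSyms_func c _)
    exact hc1.2 (hθsyms ⟨⟨hmem, hcφ⟩, hc1.1⟩)
  · -- sentSyms ψ ∩ FS ⊆ sentSyms φ
    intro p hp
    have h1 := (hψsyms hp.1).1
    rw [symsOfT] at h1
    exact symsOfT_bfGTerms φ h1

end PaperSE
end

section
/- Let T be a theory and ∃ē φ(ē, ȳ) an existential formula with free variables ȳ. A quantifier-free formula ψ(ȳ) is a T-cover (T-uniform interpolant) of ∃ē φ(ē, ȳ) if and only if: (1) T ⊨ φ(ē, ȳ) → ψ(ȳ), and (2') for every model A of T and every tuple ā of elements of A with A ⊨ ψ(ā), there exists another model B of T such that A embeds into B and B ⊨ ∃ē φ(ē, ā). -/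
/- Common framework: first-order signatures with designated sets of interpreted symbols,
uninterpreted (extension) function symbols and fresh constants, clauses, flatness/linearity,
instances, locality of theory extensions, (general) uniform interpolants, and a semantic
specification of the symbol-elimination Algorithm 1 of the paper. -/

open FirstOrder FirstOrder.Language

namespace PaperSE


/- ### Auxiliary machinery for the proof of the cover characterization -/

section CoverAux

variable {L : FirstOrder.Language.{0, 0}}

/-- Conjunction of a list of formulas. -/
def conjList {β : Type} : List (L.Formula β) → L.Formula β
  | [] => ⊤
  | f :: l => f ⊓ conjList l

lemma conjList_isQF {β : Type} : ∀ (l : List (L.Formula β)), (∀ f ∈ l, f.IsQF) →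
    (conjList l).IsQF
  | [], _ => BoundedFormula.isQF_bot.not
  | f :: l, h => ((h f List.mem_cons_self).inf
      (conjList_isQF l fun g hg => h g (List.mem_cons_of_mem _ hg)))

lemma realize_conjList {β M : Type} [L.Structure M] {v : β → M} :
    ∀ {l : List (L.Formula β)}, (conjList l).Realize v ↔ ∀ f ∈ l, f.Realize v
  | [] => by simp [conjList]
  | f :: l => by
    simp [conjList, Formula.realize_inf, realize_conjList (l := l)]

/-- The sentence (in the language with constants from `α`) obtained from an `L`-formula
by substituting constants for the free variables. -/
def sentOf {α ι : Type} (θ : L.Formula ι) (c : ι → α) : L[[α]].Sentence :=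
  ((L.lhomWithConstants α).onFormula θ).subst fun i => (L.con (c i)).term

lemma realize_sentOf {α ι : Type} (θ : L.Formula ι) (c : ι → α)
    (N : Type) [SN' : L[[α]].Structure N] [SN : L.Structure N]
    [(L.lhomWithConstants α).IsExpansionOn N] :
    (sentOf θ c).Realize N ↔
      θ.Realize (fun i => ((L.con (c i)).term.realize (default : Empty → N) : N)) := by
  unfold sentOf
  rw [Sentence.Realize, Formula.Realize, BoundedFormula.realize_subst]
  exact LHom.realize_onFormula _ _

lemma realizeSent_iff {M : Type} [S : L.Structure M] (σ : L.Sentence) :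
    RealizeSent M S σ ↔ σ.Realize M := by
  have h : (fun e : Empty => e.elim : Empty → M) = default := Subsingleton.elim _ _
  show @Formula.Realize L M S Empty σ (fun e : Empty => e.elim) ↔
    @Formula.Realize L M S Empty σ default
  rw [h]

end CoverAux

/-- Semantic characterization of `T`-covers (uniform interpolants):
a quantifier-free formula `ψ(ȳ)` is a `T`-cover of `∃ē φ(ē, ȳ)` iff
(1) `T ⊨ φ(ē, ȳ) → ψ(ȳ)` and (2') every model `A` of `T` with `A ⊨ ψ(ā)` embeds into a
model `B` of `T` with `B ⊨ ∃ē φ(ē, ā)`.  (Embeddings are `SubEmb` w.r.t. all symbols.) -/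
theorem cover_semantic_characterization
    (L : FirstOrder.Language.{0, 0}) (T : L.Theory)
    (m k : ℕ) (φ : L.Formula (Fin m ⊕ Fin k)) (ψ : L.Formula (Fin k)) (hψ : ψ.IsQF) :
    -- `ψ` is a `T`-cover of `∃ē φ(ē, ȳ)` :
    ((∀ (M : Type) (S : L.Structure M), Nonempty M → ModelsT M S T →
        ∀ (e : Fin m → M) (y : Fin k → M),
          RealizeF M S φ (Sum.elim e y) → RealizeF M S ψ y) ∧
     (∀ (p : ℕ) (θ : L.Formula (Fin k ⊕ Fin p)), θ.IsQF →
        (∀ (M : Type) (S : L.Structure M), Nonempty M → ModelsT M S T →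
          ∀ (e : Fin m → M) (y : Fin k → M) (z : Fin p → M),
            RealizeF M S φ (Sum.elim e y) → RealizeF M S θ (Sum.elim y z)) →
        (∀ (M : Type) (S : L.Structure M), Nonempty M → ModelsT M S T →
          ∀ (y : Fin k → M) (z : Fin p → M),
            RealizeF M S ψ y → RealizeF M S θ (Sum.elim y z))))
    ↔
    -- conditions (1) and (2') :
    ((∀ (M : Type) (S : L.Structure M), Nonempty M → ModelsT M S T →
        ∀ (e : Fin m → M) (y : Fin k → M),
          RealizeF M S φ (Sum.elim e y) → RealizeF M S ψ y) ∧
     (∀ (M : Type) (S : L.Structure M), Nonempty M → ModelsT M S T →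
        ∀ a : Fin k → M, RealizeF M S ψ a →
          ∃ (N : Type) (_ : Nonempty N) (SN : L.Structure N)
            (g : SubEmb L Set.univ M N S SN),
            ModelsT N SN T ∧ ∃ e : Fin m → N, RealizeF N SN φ (Sum.elim e (g.toFun ∘ a))))  := by
  classical
  constructor
  · rintro ⟨h1, h2⟩
    refine ⟨h1, ?_⟩
    intro M S hne hMT a ha
    letI := S
    have ha' : ψ.Realize a := ha
    -- the quantifier-free diagram-like theory over `L[[M ⊕ Fin m]]`
    let D : Set ((L[[M ⊕ Fin m]]).Sentence) :=
      {σ | ∃ (p : ℕ) (θ : L.Formula (Fin p)) (v : Fin p → M),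
        θ.IsQF ∧ θ.Realize v ∧ σ = sentOf θ (fun i => Sum.inl (v i))}
    let cφ : (Fin m ⊕ Fin k) → (M ⊕ Fin m) :=
      Sum.elim (fun i => Sum.inr i) (fun i => Sum.inl (a i))
    let T' : (L[[M ⊕ Fin m]]).Theory :=
      (L.lhomWithConstants (M ⊕ Fin m)).onTheory T ∪ {sentOf φ cφ} ∪ D
    -- Step 1: key satisfiability property coming from the cover minimality
    have keySat : ∀ (p : ℕ) (θ : L.Formula (Fin p)) (v : Fin p → M), θ.IsQF →
        θ.Realize v →
        ∃ (N : Type) (_ : Nonempty N) (SN : L.Structure N) (e : Fin m → N) (w : M → N),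
          ModelsT N SN T ∧ (@Formula.Realize L N SN _ φ (Sum.elim e (w ∘ a))) ∧
            (@Formula.Realize L N SN _ θ (w ∘ v)) := by
      intro p θ v hqf hθv
      by_contra hcon
      -- equations recording coincidences among the parameters `a` and `v`
      let eqs : List (L.Formula (Fin k ⊕ Fin p)) :=
        (((List.finRange k) ×ˢ (List.finRange k)).map fun q =>
          if a q.1 = a q.2 then
            Term.equal (Term.var (Sum.inl q.1)) (Term.var (Sum.inl q.2)) else ⊤) ++
        (((List.finRange p) ×ˢ (List.finRange p)).map fun q =>
          if v q.1 = v q.2 then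
            Term.equal (Term.var (Sum.inr q.1)) (Term.var (Sum.inr q.2)) else ⊤) ++
        (((List.finRange k) ×ˢ (List.finRange p)).map fun q =>
          if a q.1 = v q.2 then
            Term.equal (Term.var (Sum.inl q.1)) (Term.var (Sum.inr q.2)) else ⊤)
      let Θ : L.Formula (Fin k ⊕ Fin p) := (θ.relabel Sum.inr) ⊓ conjList eqs
      have hΘqf : Θ.IsQF := by
        refine BoundedFormula.IsQF.inf (BoundedFormula.IsQF.relabel hqf _) (conjList_isQF _ ?_)
        intro f hf
        simp only [eqs, List.mem_append, List.mem_map] at hf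
        rcases hf with (⟨q, _, rfl⟩ | ⟨q, _, rfl⟩) | ⟨q, _, rfl⟩ <;> split <;>
          first
            | exact (BoundedFormula.IsAtomic.equal _ _).isQF
            | exact BoundedFormula.isQF_bot.not
      have hclaim : ∀ (N : Type) (SN : L.Structure N), Nonempty N → ModelsT N SN T →
          ∀ (e : Fin m → N) (y : Fin k → N) (z : Fin p → N),
            RealizeF N SN φ (Sum.elim e y) → RealizeF N SN Θ.not (Sum.elim y z) := by
        intro N SN hneN hNT e y z hφr
        letI := SN
        have : ¬ Θ.Realize (Sum.elim y z) := by
          intro hΘr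
          rw [Formula.realize_inf] at hΘr
          obtain ⟨hθr, heqs⟩ := hΘr
          rw [realize_conjList] at heqs
          have heq1 : ∀ i i', a i = a i' → y i = y i' := by
            intro i i' haa
            have hf := heqs (Term.equal (Term.var (Sum.inl i)) (Term.var (Sum.inl i')))
              (List.mem_append.2 (Or.inl (List.mem_append.2 (Or.inl
                (List.mem_map.2 ⟨(i, i'), List.mem_product.2
                  ⟨List.mem_finRange _, List.mem_finRange _⟩, if_pos haa⟩)))))
            rw [Formula.realize_equal] at hf
            simpa using hf
          have heq2 : ∀ j j', v j = v j' → z j = z j' := by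
            intro j j' hvv
            have hf := heqs (Term.equal (Term.var (Sum.inr j)) (Term.var (Sum.inr j')))
              (List.mem_append.2 (Or.inl (List.mem_append.2 (Or.inr
                (List.mem_map.2 ⟨(j, j'), List.mem_product.2
                  ⟨List.mem_finRange _, List.mem_finRange _⟩, if_pos hvv⟩)))))
            rw [Formula.realize_equal] at hf
            simpa using hf
          have heq3 : ∀ i j, a i = v j → y i = z j := by
            intro i j hav
            have hf := heqs (Term.equal (Term.var (Sum.inl i)) (Term.var (Sum.inr j)))
              (List.mem_append.2 (Or.inr
                (List.mem_map.2 ⟨(i, j), List.mem_product.2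
                  ⟨List.mem_finRange _, List.mem_finRange _⟩, if_pos hav⟩)))
            rw [Formula.realize_equal] at hf
            simpa using hf
          let w : M → N := fun x =>
            if h : ∃ i, a i = x then y h.choose
            else if h' : ∃ j, v j = x then z h'.choose
            else Classical.choice hneN
          have hwa : ∀ i, w (a i) = y i := by
            intro i
            have h : ∃ i', a i' = a i := ⟨i, rfl⟩
            simp only [w, dif_pos h]
            exact heq1 _ _ h.choose_spec
          have hwv : ∀ j, w (v j) = z j := by
            intro j
            by_cases h : ∃ i, a i = v j
            · simp only [w, dif_pos h]
              exact heq3 _ _ h.choose_spec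
            · have h' : ∃ j', v j' = v j := ⟨j, rfl⟩
              simp only [w, dif_neg h, dif_pos h']
              exact heq2 _ _ h'.choose_spec
          apply hcon
          refine ⟨N, hneN, SN, e, w, hNT, ?_, ?_⟩
          · have hx : Sum.elim e (w ∘ a) = Sum.elim e y := by
              funext s
              cases s with
              | inl i => rfl
              | inr i => exact hwa i
            rw [hx]
            exact hφr
          · have hθz : θ.Realize z := by
              have h' := hθr
              rw [Formula.realize_relabel] at h'
              simpa using h'
            have hx : w ∘ v = z := funext hwv
            rw [hx]
            exact hθz
        exact this
      have hmin := h2 p Θ.not hΘqf.not hclaim M S hne hMT a v ha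
      have hΘav : Θ.Realize (Sum.elim a v) := by
        rw [Formula.realize_inf]
        constructor
        · rw [Formula.realize_relabel]
          simpa using hθv
        · rw [realize_conjList]
          intro f hf
          simp only [eqs, List.mem_append, List.mem_map] at hf
          rcases hf with (⟨q, _, rfl⟩ | ⟨q, _, rfl⟩) | ⟨q, _, rfl⟩ <;> split <;>
            first
              | (rw [Formula.realize_equal]; simpa using (by assumption))
              | exact Formula.realize_top.2 trivial
      exact hmin hΘav
    -- Step 2: the full theory `T'` is satisfiable, by compactness
    have hTsat : T'.IsSatisfiable := by
      rw [Theory.isSatisfiable_iff_isFinitelySatisfiable]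
      intro T0 hT0
      have hfin : ((T0 : Set ((L[[M ⊕ Fin m]]).Sentence)) ∩ D).Finite :=
        T0.finite_toSet.inter_of_left D
      have hcomb : ∀ (s : Set ((L[[M ⊕ Fin m]]).Sentence)), s.Finite → s ⊆ D →
          ∃ (p : ℕ) (θ : L.Formula (Fin p)) (v : Fin p → M), θ.IsQF ∧ θ.Realize v ∧
            ∀ (N : Type) (SN' : (L[[M ⊕ Fin m]]).Structure N),
              (@Sentence.Realize _ N SN' (sentOf θ (fun i => Sum.inl (v i)))) →
              ∀ σ ∈ s, @Sentence.Realize _ N SN' σ := by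
        intro s hs
        refine Set.Finite.induction_on (motive := fun s _ => s ⊆ D →
          ∃ (p : ℕ) (θ : L.Formula (Fin p)) (v : Fin p → M), θ.IsQF ∧ θ.Realize v ∧
            ∀ (N : Type) (SN' : (L[[M ⊕ Fin m]]).Structure N),
              (@Sentence.Realize _ N SN' (sentOf θ (fun i => Sum.inl (v i)))) →
              ∀ σ ∈ s, @Sentence.Realize _ N SN' σ) s hs ?_ ?_
        · intro _
          exact ⟨0, ⊤, Fin.elim0, BoundedFormula.isQF_bot.not, Formula.realize_top.2 trivial,
            fun N SN' _ σ hσ => absurd hσ (Set.notMem_empty σ)⟩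
        · intro σ s' _ _ ih hsub
          obtain ⟨p₁, θ₁, v₁, hqf₁, hre₁, hσeq⟩ := hsub (Set.mem_insert _ _)
          obtain ⟨p₂, θ₂, v₂, hqf₂, hre₂, hforce₂⟩ :=
            ih (fun x hx => hsub (Set.mem_insert_of_mem _ hx))
          refine ⟨p₁ + p₂, (θ₁.relabel (Fin.castAdd p₂)) ⊓ (θ₂.relabel (Fin.natAdd p₁)),
            Fin.append v₁ v₂,
            (BoundedFormula.IsQF.relabel hqf₁ _).inf (BoundedFormula.IsQF.relabel hqf₂ _),
            ?_, ?_⟩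
          · rw [Formula.realize_inf, Formula.realize_relabel, Formula.realize_relabel]
            constructor
            · have hx : (Fin.append v₁ v₂ : Fin (p₁ + p₂) → M) ∘ Fin.castAdd p₂ = v₁ :=
                funext fun i => Fin.append_left v₁ v₂ i
              rw [hx]; exact hre₁
            · have hx : (Fin.append v₁ v₂ : Fin (p₁ + p₂) → M) ∘ Fin.natAdd p₁ = v₂ :=
                funext fun i => Fin.append_right v₁ v₂ i
              rw [hx]; exact hre₂
          · intro N SN' hsent σ' hσ'
            letI := SN'
            letI : L.Structure N := (L.lhomWithConstants (M ⊕ Fin m)).reduct N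
            letI : (L.lhomWithConstants (M ⊕ Fin m)).IsExpansionOn N :=
              LHom.isExpansionOn_reduct _ _
            rw [realize_sentOf, Formula.realize_inf, Formula.realize_relabel,
              Formula.realize_relabel] at hsent
            obtain ⟨hs1, hs2⟩ := hsent
            have hr1 : (sentOf θ₁ (fun i => (Sum.inl (v₁ i) : M ⊕ Fin m))).Realize N := by
              rw [realize_sentOf]
              convert hs1 using 2
              simp [Fin.append_left]
            have hr2 : (sentOf θ₂ (fun i => (Sum.inl (v₂ i) : M ⊕ Fin m))).Realize N := by
              rw [realize_sentOf]
              convert hs2 using 2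
              simp [Fin.append_right]
            rcases Set.mem_insert_iff.1 hσ' with rfl | hσ'
            · rw [hσeq]
              exact hr1
            · exact hforce₂ N SN' hr2 σ' hσ'
      obtain ⟨p, θc, v, hqfc, hrec, hforce⟩ := hcomb _ hfin Set.inter_subset_right
      obtain ⟨N, hneN, SN, e, w, hNT, hφr, hθr⟩ := keySat p θc v hqfc hrec
      letI := SN
      letI : (constantsOn (M ⊕ Fin m)).Structure N := constantsOn.structure (Sum.elim w e)
      letI SNc : (L[[M ⊕ Fin m]]).Structure N := inferInstance
      letI : (L.lhomWithConstants (M ⊕ Fin m)).IsExpansionOn N := inferInstance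
      have hsent : (sentOf θc (fun i => (Sum.inl (v i) : M ⊕ Fin m))).Realize N := by
        rw [realize_sentOf]
        exact hθr
      have hmod : ∀ σ ∈ (T0 : (L[[M ⊕ Fin m]]).Theory), σ.Realize N := by
        intro σ hσ
        have hm := hT0 hσ
        simp only [T', Set.mem_union] at hm
        rcases hm with (hσ' | hσ') | hσ'
        · obtain ⟨σ₀, hσ₀, rfl⟩ := hσ'
          exact (LHom.realize_onSentence _ _ _).2 ((realizeSent_iff σ₀).1 (hNT σ₀ hσ₀))
        · rw [Set.mem_singleton_iff] at hσ'
          subst hσ'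
          rw [realize_sentOf]
          have hx : (fun s => ((L.con (cφ s)).term.realize (default : Empty → N) : N))
              = Sum.elim e (w ∘ a) := by
            funext s
            cases s with
            | inl i => rfl
            | inr i => rfl
          rw [hx]
          exact hφr
        · exact hforce N SNc hsent σ ⟨hσ, hσ'⟩
      haveI : Nonempty N := hneN
      haveI : N ⊨ (T0 : (L[[M ⊕ Fin m]]).Theory) := (Theory.model_iff _).2 hmod
      exact Theory.Model.isSatisfiable N
    -- Step 3: extract the extension model and the embedding
    obtain ⟨NN⟩ := hTsat
    letI SN : L.Structure NN := (L.lhomWithConstants (M ⊕ Fin m)).reduct NN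
    letI : (L.lhomWithConstants (M ⊕ Fin m)).IsExpansionOn NN :=
      LHom.isExpansionOn_reduct _ _
    let g : M → NN := fun x =>
      ((L.con (Sum.inl x : M ⊕ Fin m)).term.realize (default : Empty → NN) : NN)
    let e : Fin m → NN := fun i =>
      ((L.con (Sum.inr i : M ⊕ Fin m)).term.realize (default : Empty → NN) : NN)
    have hD : ∀ σ ∈ D, σ.Realize NN := fun σ hσ =>
      NN.is_model.realize_of_mem σ (Set.mem_union_right _ hσ)
    have hDreal : ∀ (p : ℕ) (θ : L.Formula (Fin p)) (v : Fin p → M), θ.IsQF →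
        θ.Realize v → θ.Realize (fun i => g (v i)) := by
      intro p θ v hqf hrv
      have hσ : sentOf θ (fun i => Sum.inl (v i)) ∈ D := ⟨p, θ, v, hqf, hrv, rfl⟩
      have hx := hD _ hσ
      rw [realize_sentOf] at hx
      exact hx
    refine ⟨NN, inferInstance, SN, ⟨g, ?_, ?_, ?_⟩, ?_, e, ?_⟩
    · -- injectivity
      intro x x' hxx'
      by_contra hne'
      have hr := hDreal 2 (Formula.not (Term.equal (Term.var 0) (Term.var 1)))
        (fun i => if i = 0 then x else x')
        ((BoundedFormula.IsAtomic.equal _ _).isQF.not)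
        (by
          rw [Formula.realize_not, Formula.realize_equal]
          simpa using hne')
      rw [Formula.realize_not, Formula.realize_equal] at hr
      exact hr (by simpa using hxx')
    · -- functions
      intro n f _ x
      have hr := hDreal (n + 1)
        (Term.equal (Term.func f (fun i => Term.var i.castSucc)) (Term.var (Fin.last n)))
        (Fin.snoc x (FunM M S f x))
        ((BoundedFormula.IsAtomic.equal _ _).isQF)
        (by
          rw [Formula.realize_equal]
          simp only [Term.realize_func, Term.realize_var, Fin.snoc_castSucc, Fin.snoc_last]
          rfl)
      rw [Formula.realize_equal] at hr
      simp only [Term.realize_func, Term.realize_var, Fin.snoc_castSucc, Fin.snoc_last] at hr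
      exact hr.symm
    · -- relations
      intro n r x
      by_cases hR : RelM M S r x
      · have hr := hDreal n (Relations.formula r (fun i => Term.var i)) x
          ((BoundedFormula.IsAtomic.rel _ _).isQF)
          (by
            rw [Formula.realize_rel]
            exact hR)
        rw [Formula.realize_rel] at hr
        exact iff_of_true hR (by exact hr)
      · have hr := hDreal n (Formula.not (Relations.formula r (fun i => Term.var i))) x
          ((BoundedFormula.IsAtomic.rel _ _).isQF.not)
          (by
            rw [Formula.realize_not, Formula.realize_rel]
            exact hR)
        rw [Formula.realize_not, Formula.realize_rel] at hr
        exact iff_of_false hR (by exact hr)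
    · -- NN models T
      intro σ₀ hσ₀
      have hm : ((L.lhomWithConstants (M ⊕ Fin m)).onSentence σ₀).Realize NN :=
        NN.is_model.realize_of_mem _
          (Set.mem_union_left _ (Set.mem_union_left _ ⟨σ₀, hσ₀, rfl⟩))
      have hm2 : σ₀.Realize (NN : Type) := by simpa using hm
      exact (realizeSent_iff σ₀).2 hm2
    · -- φ holds at (e, g ∘ a)
      have hm : (sentOf φ cφ).Realize NN :=
        NN.is_model.realize_of_mem _
          (Set.mem_union_left _ (Set.mem_union_right _ rfl))
      rw [realize_sentOf] at hm
      have hx : (fun s => ((L.con (cφ s)).term.realize (default : Empty → NN) : NN))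
          = Sum.elim e (g ∘ a) := by
        funext s
        cases s with
        | inl i => rfl
        | inr i => rfl
      rw [hx] at hm
      exact hm
  · rintro ⟨h1, h2'⟩
    refine ⟨h1, ?_⟩
    intro p θ hθ hent M S hne hMT y z hψy
    obtain ⟨N, hneN, SN, g, hNT, e, hφ⟩ := h2' M S hne hMT y hψy
    letI := S
    letI := SN
    let emb : M ↪[L] N :=
      { toFun := g.toFun
        inj' := g.inj
        map_fun' := fun {n} f x => g.map_fun n f (Set.mem_univ _) x
        map_rel' := fun {n} r x => (g.map_rel n r x).symm }
    have h3 : θ.Realize (Sum.elim (g.toFun ∘ y) (g.toFun ∘ z)) :=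
      hent N SN hneN hNT e (g.toFun ∘ y) (g.toFun ∘ z) hφ
    have h4 : Sum.elim (g.toFun ∘ y) (g.toFun ∘ z) = emb ∘ Sum.elim y z := by
      funext s
      cases s with
      | inl i => rfl
      | inr i => rfl
    rw [h4] at h3
    have h5 := (BoundedFormula.IsQF.realize_embedding hθ emb
      (v := Sum.elim y z) (xs := default)).1
    have h6 : (emb ∘ (default : Fin 0 → M)) = (default : Fin 0 → N) :=
      Subsingleton.elim _ _
    have h7 : θ.Realize (Sum.elim y z) := by
      apply h5
      rw [h6]
      exact h3
    exact h7


end PaperSE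
end
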